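/- arXiv:1311.2863 — 4 statements merged into one kernel-verified Lean document; each statement's English description precedes it below -/
import Mathlib

section
/- Suppose G is an open set in ℝⁿ with finite Lebesgue measure, and let 0 < δ, τ < 1 and 0 < p ≤ q < ∞ be given. Then the following are equivalent: (A) there is a constant C₁ > 0 such that inf_{a∈ℝ} sup_{t>0} |{x ∈ G : |u(x) − a| > t}| · t^q ≤ C₁ (∫_G ∫_{B(y, τ dist(y,∂G))} |u(y) − u(z)|^p / |y−z|^{n+δp} dz dy)^{q/p} for every u ∈ L^∞(G); (B) there is a constant C₂ > 0 such that inf_{a∈ℝ} ∫_G |u(x) − a|^q dx ≤ C₂ (∫_G ∫_{B(y, τ dist(y,∂G))} |u(y) − u(z)|^p / |y−z|^{n+δp} dz dy)^{q/p} for every u ∈ L¹(G). Moreover, in the implication from (A) to (B) one can take C₂ = C(p,q)·C₁ for a constant C(p,q) depending only on p and q, and in the implication from (B) to (A) one can take C₁ = C₂. -/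
open MeasureTheory Metric Set
open scoped ENNReal NNReal BigOperators

noncomputable section

/-- Euclidean `n`-space. -/
abbrev Eucl (n : ℕ) : Type := EuclideanSpace ℝ (Fin n)

/-- `D` is a `c`-John domain (bounded or unbounded): an open connected set such that each
pair of points can be joined by a rectifiable curve, parametrized by arc length
(formalized as a `1`-Lipschitz parametrization on `[0, ℓ]`), along which
`dist(γ t, ∂D) ≥ min{t, ℓ - t}/c`. -/
def IsJohnDomain (n : ℕ) (c : ℝ) (D : Set (Eucl n)) : Prop :=
  IsOpen D ∧ IsConnected D ∧
    ∀ x₁ ∈ D, ∀ x₂ ∈ D, ∃ ℓ : ℝ, 0 ≤ ℓ ∧ ∃ γ : ℝ → Eucl n,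
      γ 0 = x₁ ∧ γ ℓ = x₂ ∧ (∀ t ∈ Icc (0:ℝ) ℓ, γ t ∈ D) ∧
      LipschitzOnWith 1 γ (Icc 0 ℓ) ∧
      ∀ t ∈ Icc (0:ℝ) ℓ, min t (ℓ - t) / c ≤ infDist (γ t) (frontier D)

/-- The ball `B(x, τ·dist(x, ∂G))`; by convention, if `∂G = ∅` (i.e. `G = ℝⁿ`)
it is all of `ℝⁿ`. -/
def tauBall (n : ℕ) (τ : ℝ) (G : Set (Eucl n)) (x : Eucl n) : Set (Eucl n) :=
  {y : Eucl n | edist x y < ENNReal.ofReal τ * EMetric.infEdist x (frontier G)}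

/-- The fractional kernel `|u x - u y|^p / |x - y|^(n + δp)` as an extended real. -/
def fracKernel (n : ℕ) (δ p : ℝ) (u : Eucl n → ℝ) (x y : Eucl n) : ℝ≥0∞ :=
  ENNReal.ofReal (|u x - u y| ^ p / dist x y ^ ((n : ℝ) + δ * p))

/-- The `p`-th power of the seminorm `|u|_{W^{δ,p}_τ(G)}`. -/
def fracEnergyTau (n : ℕ) (δ τ p : ℝ) (G : Set (Eucl n)) (u : Eucl n → ℝ) : ℝ≥0∞ :=
  ∫⁻ x in G, ∫⁻ y in tauBall n τ G x, fracKernel n δ p u x y ∂volume ∂volume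

/-- The `p`-th power of the seminorm `|u|_{W^{δ,p}(G)}`. -/
def fracEnergy (n : ℕ) (δ p : ℝ) (G : Set (Eucl n)) (u : Eucl n → ℝ) : ℝ≥0∞ :=
  ∫⁻ x in G, ∫⁻ y in G, fracKernel n δ p u x y ∂volume ∂volume

/-- The fractional `(δ,p)`-capacity of a compact set `K ⊆ G`:
`inf |u|_{W^{δ,p}(G)}^p` over `u ∈ C₀(G)` with `u ≥ 1` on `K`. -/
def fracCap (n : ℕ) (δ p : ℝ) (K G : Set (Eucl n)) : ℝ≥0∞ :=
  ⨅ (u : Eucl n → ℝ) (_ : Continuous u) (_ : HasCompactSupport u) (_ : tsupport u ⊆ G)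
    (_ : ∀ x ∈ K, 1 ≤ u x), fracEnergy n δ p G u

/-- The fractional `(δ,q,p)`-Hardy inequality holds in `G` with constant `C`. -/
def HasFracHardy (n : ℕ) (δ p q C : ℝ) (G : Set (Eucl n)) : Prop :=
  ∀ u : Eucl n → ℝ, Continuous u → HasCompactSupport u → tsupport u ⊆ G →
    (∫⁻ x in G, ENNReal.ofReal
        (|u x| ^ q / infDist x (frontier G) ^ (q * (δ + n * (1/q - 1/p)))) ∂volume)
      ≤ ENNReal.ofReal C * fracEnergy n δ p G u ^ (q / p)

/-- The closed axis-parallel cube with center `z` and half side length `r`. -/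
def cube (n : ℕ) (z : Eucl n) (r : ℝ) : Set (Eucl n) :=
  {x : Eucl n | ∀ i, |x i - z i| ≤ r}

/-- The quantity `|Q|^(-1-δ/n) ∫_Q |u - u_Q|` for the cube `Q = cube n z r`. -/
def aTerm (n : ℕ) (δ : ℝ) (u : Eucl n → ℝ) (z : Eucl n) (r : ℝ) : ℝ :=
  ((volume (cube n z r)).toReal) ^ (-(1:ℝ) - δ / n) *
    ∫ x in cube n z r, |u x - ⨍ y in cube n z r, u y ∂volume| ∂volume

/-- The seminorm `|u|_{A^{δ,p}_κ(G)}`: the supremum, over families `𝒬` of pairwise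
disjoint cubes `Q` (given by center-halfside pairs) with `κQ ⊆ G`, of the `L^p(G)`
norm of `∑_{Q ∈ 𝒬} (|Q|^(-1-δ/n) ∫_Q |u - u_Q|) χ_Q`. -/
def ASeminorm (n : ℕ) (κ δ p : ℝ) (G : Set (Eucl n)) (u : Eucl n → ℝ) : ℝ≥0∞ :=
  ⨆ (𝒬 : Set (Eucl n × ℝ)) (_ : ∀ c ∈ 𝒬, 0 < c.2 ∧ cube n c.1 (κ * c.2) ⊆ G)
    (_ : ∀ c ∈ 𝒬, ∀ c' ∈ 𝒬, c ≠ c' → cube n c.1 c.2 ∩ cube n c'.1 c'.2 = ∅),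
    (∫⁻ x in G,
        (∑' c : 𝒬, (cube n (c : Eucl n × ℝ).1 (c : Eucl n × ℝ).2).indicator
          (fun _ => ENNReal.ofReal (aTerm n δ u (c : Eucl n × ℝ).1 (c : Eucl n × ℝ).2)) x) ^ p
      ∂volume) ^ (1 / p)

/-- `Q` is a closed dyadic cube in `ℝⁿ`. -/
def IsDyadicCube (n : ℕ) (Q : Set (Eucl n)) : Prop :=
  ∃ (k : ℤ) (z : Fin n → ℤ),
    Q = {x : Eucl n | ∀ i, (z i : ℝ) * (2:ℝ) ^ k ≤ x i ∧ x i ≤ ((z i : ℝ) + 1) * (2:ℝ) ^ k}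

/-- `W` is a Whitney decomposition of the proper open set `G`: a countable family of
closed dyadic cubes with pairwise disjoint interiors whose union is `G`, with
`diam Q ≤ dist(Q, ∂G) ≤ 4 diam Q` for each cube `Q ∈ W`. -/
def IsWhitneyDecomposition (n : ℕ) (G : Set (Eucl n)) (W : Set (Set (Eucl n))) : Prop :=
  W.Countable ∧ (∀ Q ∈ W, IsDyadicCube n Q) ∧ ⋃₀ W = G ∧
    (W.Pairwise fun Q R => interior Q ∩ interior R = ∅) ∧
    ∀ Q ∈ W, (∀ x ∈ Q, Metric.diam Q ≤ infDist x (frontier G)) ∧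
      ∃ x ∈ Q, infDist x (frontier G) ≤ 4 * Metric.diam Q

/-- `lam` is an upper Assouad-type covering exponent for `E`: there is `C > 0` such
that for every `x ∈ E` and all `0 < r < R < 2 diam E`, the set `E ∩ B(x,R)` can be
covered by at most `C (R/r)^lam` balls centered in `E` of radius `r`. -/
def UpperAssouadBound (n : ℕ) (E : Set (Eucl n)) (lam : ℝ) : Prop :=
  ∃ C : ℝ, 0 < C ∧ ∀ x ∈ E, ∀ r R : ℝ, 0 < r → r < R →
    ENNReal.ofReal R < 2 * EMetric.diam E →
    ∃ F : Finset (Eucl n), ↑F ⊆ E ∧ (F.card : ℝ) ≤ C * (R / r) ^ lam ∧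
      E ∩ ball x R ⊆ ⋃ y ∈ F, ball y r

/-- The upper Assouad dimension of `E`. -/
def upperAssouadDim (n : ℕ) (E : Set (Eucl n)) : ℝ :=
  sInf {lam : ℝ | 0 ≤ lam ∧ UpperAssouadBound n E lam}

/-- `lam` is a lower Assouad-type exponent for `E`: there is `C > 0` such that for
every `x ∈ E` and all `0 < r < R < 2 diam E`, at least `C (R/r)^lam` balls centered
in `E` of radius `r` are needed to cover `E ∩ B(x,R)`. -/
def LowerAssouadBound (n : ℕ) (E : Set (Eucl n)) (lam : ℝ) : Prop :=
  ∃ C : ℝ, 0 < C ∧ ∀ x ∈ E, ∀ r R : ℝ, 0 < r → r < R →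
    ENNReal.ofReal R < 2 * EMetric.diam E →
    ∀ F : Finset (Eucl n), ↑F ⊆ E → (E ∩ ball x R ⊆ ⋃ y ∈ F, ball y r) →
      C * (R / r) ^ lam ≤ (F.card : ℝ)

/-- The lower Assouad dimension of `E`. -/
def lowerAssouadDim (n : ℕ) (E : Set (Eucl n)) : ℝ :=
  sSup {lam : ℝ | 0 ≤ lam ∧ LowerAssouadBound n E lam}

end


noncomputable section AuxProofs
open Filter Topology

lemma tauBall_subset {n : ℕ} {τ : ℝ} (hτ1 : τ ≤ 1) {G : Set (Eucl n)} (hG : IsOpen G)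
    {x : Eucl n} (hx : x ∈ G) : tauBall n τ G x ⊆ G := by
  intro y hy
  by_contra hyG
  -- the segment from x to y meets the frontier
  obtain ⟨z, hzseg, hzfr⟩ : ∃ z ∈ segment ℝ x y, z ∈ frontier G := by
    by_contra h
    push_neg at h
    have hpc : IsPreconnected (segment ℝ x y) := (convex_segment x y).isPreconnected
    have hsub : segment ℝ x y ⊆ G ∪ (closure G)ᶜ := by
      intro z hz
      rcases Classical.em (z ∈ closure G) with hcl | hcl
      · left
        have : z ∈ interior G := by
          by_contra hint
          exact h z hz ⟨hcl, hint⟩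
        rwa [hG.interior_eq] at this
      · right; exact hcl
    have hyc : y ∉ closure G := by
      intro hc
      have : y ∈ interior G := by
        by_contra hint
        exact h y (right_mem_segment ℝ x y) ⟨hc, hint⟩
      rw [hG.interior_eq] at this
      exact hyG this
    obtain ⟨w, hw⟩ := hpc G (closure G)ᶜ hG (isClosed_closure.isOpen_compl) hsub
      ⟨x, left_mem_segment ℝ x y, hx⟩
      ⟨y, right_mem_segment ℝ x y, hyc⟩
    exact hw.2.2 (subset_closure hw.2.1)
  have h1 : EMetric.infEdist x (frontier G) ≤ edist x z :=
    EMetric.infEdist_le_edist_of_mem hzfr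
  have h2 : edist x z ≤ edist x y := by
    obtain ⟨a, b, ha, hb, hab, rfl⟩ := hzseg
    have hz : a • x + b • y - x = b • (y - x) := by
      have hA : a = 1 - b := by linarith
      rw [hA]; module
    have hd : dist x (a • x + b • y) ≤ dist x y := by
      rw [dist_eq_norm', dist_eq_norm', hz, norm_smul, Real.norm_eq_abs, abs_of_nonneg hb]
      nlinarith [norm_nonneg (y - x)]
    rw [edist_dist, edist_dist]
    exact ENNReal.ofReal_le_ofReal hd
  have h3 : edist x y < edist x y := by
    calc edist x y < ENNReal.ofReal τ * EMetric.infEdist x (frontier G) := hy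
    _ ≤ EMetric.infEdist x (frontier G) :=
        mul_le_of_le_one_left zero_le (ENNReal.ofReal_le_one.mpr hτ1)
    _ ≤ edist x z := h1
    _ ≤ edist x y := h2
  exact absurd h3 (lt_irrefl _)

/-- truncation between levels: `min (max (x - c) 0) c`. -/
def Tr (c x : ℝ) : ℝ := min (max (x - c) 0) c

lemma Tr_nonneg {c x : ℝ} (hc : 0 ≤ c) : 0 ≤ Tr c x := by
  simp only [Tr, min_def, max_def]; split_ifs <;> linarith

lemma Tr_le {c x : ℝ} : Tr c x ≤ c := min_le_right _ _

lemma Tr_sub_nonneg {c r s : ℝ} (hrs : r ≤ s) : 0 ≤ Tr c s - Tr c r := by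
  simp only [Tr, min_def, max_def]; split_ifs <;> linarith

lemma Tr_sub_le {c r s : ℝ} (hrs : r ≤ s) : Tr c s - Tr c r ≤ s - r := by
  simp only [Tr, min_def, max_def]; split_ifs <;> linarith

lemma Tr_eq_zero {c x : ℝ} (hc : 0 ≤ c) (hx : x ≤ c) : Tr c x = 0 := by
  simp only [Tr, min_def, max_def]; split_ifs <;> linarith

lemma Tr_eq_c {c x : ℝ} (hc : 0 ≤ c) (hx : 2 * c ≤ x) : Tr c x = c := by
  simp only [Tr, min_def, max_def]; split_ifs <;> linarith

lemma trunc_sum (p : ℝ) (hp : 0 < p) : ∃ Cp : ℝ, 0 < Cp ∧ ∀ r s : ℝ, 0 ≤ r → r ≤ s →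
    ∀ F : Finset ℤ, ∑ k ∈ F, (Tr ((2:ℝ)^k) s - Tr ((2:ℝ)^k) r) ^ p ≤ Cp * (s - r) ^ p := by
  classical
  set ρ : ℝ := (2:ℝ) ^ (-p) with hρdef
  have hρ0 : 0 < ρ := Real.rpow_pos_of_pos two_pos _
  have hρ1 : ρ < 1 := Real.rpow_lt_one_of_one_lt_of_neg one_lt_two (by linarith)
  have h1ρ : 0 < 1 - ρ := by linarith
  refine ⟨(1 - ρ)⁻¹ + 2, by positivity, fun r s hr hrs F => ?_⟩
  set d : ℝ := s - r with hd
  have hd0 : 0 ≤ d := by linarith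
  rcases eq_or_lt_of_le hd0 with hdz | hdpos
  · have hrs' : r = s := by linarith [hdz.symm]
    subst hrs'
    have : ∀ k ∈ F, (Tr ((2:ℝ)^k) r - Tr ((2:ℝ)^k) r) ^ p = 0 := by
      intro k _; simp [Real.zero_rpow hp.ne']
    rw [Finset.sum_congr rfl this, Finset.sum_const, smul_zero]
    positivity
  -- main case : d > 0
  have hak_nonneg : ∀ k : ℤ, 0 ≤ Tr ((2:ℝ)^k) s - Tr ((2:ℝ)^k) r := fun k => Tr_sub_nonneg hrs
  have hak_le_d : ∀ k : ℤ, Tr ((2:ℝ)^k) s - Tr ((2:ℝ)^k) r ≤ d := fun k => Tr_sub_le hrs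
  have hck : ∀ k : ℤ, (0:ℝ) < (2:ℝ)^k := fun k => zpow_pos two_pos k
  have hak_le_c : ∀ k : ℤ, Tr ((2:ℝ)^k) s - Tr ((2:ℝ)^k) r ≤ (2:ℝ)^k := fun k =>
    le_trans (sub_le_self _ (Tr_nonneg (hck k).le)) Tr_le
  rw [← Finset.sum_filter_add_sum_filter_not F (fun k => (2:ℝ)^k ≤ d)]
  have hpart1 : ∑ k ∈ F.filter (fun k => (2:ℝ)^k ≤ d),
      (Tr ((2:ℝ)^k) s - Tr ((2:ℝ)^k) r) ^ p ≤ (1 - ρ)⁻¹ * d ^ p := by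
    set J : ℤ := Int.log 2 d with hJ
    set F1 := F.filter (fun k => (2:ℝ)^k ≤ d) with hF1
    have hmem : ∀ k ∈ F1, k ≤ J := by
      intro k hk
      have hk' : (2:ℝ)^k ≤ d := (Finset.mem_filter.mp hk).2
      exact (Int.zpow_le_iff_le_log one_lt_two hdpos).mp (by exact_mod_cast hk')
    clear_value J
    have step1 : ∑ k ∈ F1, (Tr ((2:ℝ)^k) s - Tr ((2:ℝ)^k) r) ^ p
        ≤ ∑ k ∈ F1, ((2:ℝ)^k) ^ p := by
      refine Finset.sum_le_sum fun k _ => ?_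
      exact Real.rpow_le_rpow (hak_nonneg k) (hak_le_c k) hp.le
    -- geometric bound
    set φ : ℕ → ℝ := fun j => ((2:ℝ) ^ (J - (j:ℤ))) ^ p with hφ
    have hφ_nonneg : ∀ j, 0 ≤ φ j := fun j => (Real.rpow_pos_of_pos (hck _) _).le
    have key2 : ∀ m : ℤ, ((2:ℝ)^m)^p = (2:ℝ)^((m:ℝ)*p) := by
      intro m
      rw [← Real.rpow_intCast 2 m, ← Real.rpow_mul (by norm_num : (0:ℝ) ≤ 2)]
    have hφ_eq : ∀ j : ℕ, φ j = ((2:ℝ)^J) ^ p * ρ ^ j := by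
      intro j
      have keyρ : ρ ^ j = (2:ℝ)^((-p)*(j:ℝ)) := by
        rw [hρdef, ← Real.rpow_natCast ((2:ℝ)^(-p)) j,
          ← Real.rpow_mul (by norm_num : (0:ℝ) ≤ 2)]
      show ((2:ℝ) ^ (J - (j:ℤ))) ^ p = ((2:ℝ)^J) ^ p * ρ ^ j
      rw [key2, key2, keyρ, ← Real.rpow_add two_pos]
      congr 1
      push_cast
      ring
    have hsummable : Summable φ := by
      refine Summable.congr ?_ (fun j => (hφ_eq j).symm)
      exact (summable_geometric_of_lt_one hρ0.le hρ1).mul_left _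
    have htsum : ∑' j, φ j = ((2:ℝ)^J) ^ p * (1 - ρ)⁻¹ := by
      rw [tsum_congr hφ_eq, tsum_mul_left, tsum_geometric_of_lt_one hρ0.le hρ1]
    have step2 : ∑ k ∈ F1, ((2:ℝ)^k) ^ p ≤ ∑' j, φ j := by
      have himg : ∑ k ∈ F1, ((2:ℝ)^k) ^ p = ∑ k ∈ F1, φ ((J - k).toNat) := by
        refine Finset.sum_congr rfl fun k hk => ?_
        have hkJ := hmem k hk
        show ((2:ℝ)^k) ^ p = ((2:ℝ) ^ (J - ((J - k).toNat : ℤ))) ^ p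
        rw [Int.toNat_of_nonneg (by omega)]
        have hx : J - (J - k) = k := by omega
        rw [hx]
      have hinj : ∀ a ∈ F1, ∀ b ∈ F1, (J - a).toNat = (J - b).toNat → a = b := by
        intro a ha b hb hab
        have ha' := hmem a ha; have hb' := hmem b hb
        omega
      calc ∑ k ∈ F1, ((2:ℝ)^k) ^ p
          = ∑ j ∈ F1.image (fun k => (J - k).toNat), φ j := by
            rw [Finset.sum_image hinj]; exact himg
      _ ≤ ∑' j, φ j := Summable.sum_le_tsum _ (fun j _ => hφ_nonneg j) hsummable
    have hJd : ((2:ℝ)^J) ^ p ≤ d ^ p :=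
      Real.rpow_le_rpow (zpow_pos two_pos J).le
        (by rw [hJ]; exact_mod_cast Int.zpow_log_le_self one_lt_two hdpos) hp.le
    calc ∑ k ∈ F1, (Tr ((2:ℝ)^k) s - Tr ((2:ℝ)^k) r) ^ p
        ≤ ∑' j, φ j := le_trans step1 step2
    _ = ((2:ℝ)^J) ^ p * (1 - ρ)⁻¹ := htsum
    _ ≤ d ^ p * (1 - ρ)⁻¹ := by
        exact mul_le_mul_of_nonneg_right hJd (by positivity)
    _ = (1 - ρ)⁻¹ * d ^ p := by ring
  have hpart2 : ∑ k ∈ F.filter (fun k => ¬ (2:ℝ)^k ≤ d),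
      (Tr ((2:ℝ)^k) s - Tr ((2:ℝ)^k) r) ^ p ≤ 2 * d ^ p := by
    set M : ℝ := max d (r/2) with hM
    have hM0 : 0 < M := lt_max_iff.mpr (Or.inl hdpos)
    set L : ℤ := Int.log 2 M with hL
    have hL1 : (2:ℝ)^L ≤ M := by exact_mod_cast Int.zpow_log_le_self one_lt_two hM0
    have hL2 : M < (2:ℝ)^(L+1) := by exact_mod_cast Int.lt_zpow_succ_log_self one_lt_two M
    clear_value L
    set F2 := F.filter (fun k => ¬ (2:ℝ)^k ≤ d) with hF2
    have hterm : ∀ k ∈ F2, (Tr ((2:ℝ)^k) s - Tr ((2:ℝ)^k) r) ^ p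
        ≤ if ((2:ℝ)^k < s ∧ r < 2*(2:ℝ)^k) then d ^ p else 0 := by
      intro k hk
      split_ifs with hc
      · exact Real.rpow_le_rpow (hak_nonneg k) (hak_le_d k) hp.le
      · push_neg at hc
        rcases le_or_gt s ((2:ℝ)^k) with hs | hs
        · rw [Tr_eq_zero (hck k).le hs, Tr_eq_zero (hck k).le (le_trans hrs hs), sub_self,
            Real.zero_rpow hp.ne']
        · have hr2 : 2*(2:ℝ)^k ≤ r := hc hs
          rw [Tr_eq_c (hck k).le (le_trans hr2 hrs), Tr_eq_c (hck k).le hr2, sub_self,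
            Real.zero_rpow hp.ne']
    have hsubs : F2.filter (fun k => (2:ℝ)^k < s ∧ r < 2*(2:ℝ)^k)
        ⊆ ({L+1, L+2} : Finset ℤ) := by
      intro k hk
      rw [Finset.mem_filter] at hk
      have hk1 := hk.1
      have hks := hk.2.1
      have hkr := hk.2.2
      have hkd : d < (2:ℝ)^k := lt_of_not_ge (Finset.mem_filter.mp hk1).2
      have hlow : L < k := by
        rw [← zpow_lt_zpow_iff_right₀ (one_lt_two : (1:ℝ) < 2)]
        calc (2:ℝ)^L ≤ M := hL1
        _ < (2:ℝ)^k := max_lt hkd (by linarith)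
      have hhigh : k < L + 3 := by
        rw [← zpow_lt_zpow_iff_right₀ (one_lt_two : (1:ℝ) < 2)]
        have h3M : s ≤ 3 * M := by
          have h1 : d ≤ M := le_max_left _ _
          have h2 : r / 2 ≤ M := le_max_right _ _
          have : s = r + d := by rw [hd]; ring
          linarith
        calc (2:ℝ)^k < s := hks
        _ ≤ 3 * M := h3M
        _ < 3 * (2:ℝ)^(L+1) := by linarith [hL2]
        _ ≤ (2:ℝ)^(L+3) := by
            rw [zpow_add₀ (two_ne_zero : (2:ℝ) ≠ 0) L 3, zpow_add₀ (two_ne_zero : (2:ℝ) ≠ 0) L 1]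
            have h2L : (0:ℝ) < (2:ℝ)^L := hck L
            norm_num
            nlinarith
      simp only [Finset.mem_insert, Finset.mem_singleton]
      omega
    calc ∑ k ∈ F2, (Tr ((2:ℝ)^k) s - Tr ((2:ℝ)^k) r) ^ p
        ≤ ∑ k ∈ F2, (if ((2:ℝ)^k < s ∧ r < 2*(2:ℝ)^k) then d ^ p else 0) :=
          Finset.sum_le_sum hterm
    _ = ∑ k ∈ F2.filter (fun k => (2:ℝ)^k < s ∧ r < 2*(2:ℝ)^k), d ^ p :=
          (Finset.sum_filter _ _).symm
    _ ≤ ∑ k ∈ ({L+1, L+2} : Finset ℤ), d ^ p := by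
          refine Finset.sum_le_sum_of_subset_of_nonneg hsubs fun k _ _ => by positivity
    _ ≤ 2 * d ^ p := by
          rw [Finset.sum_const, nsmul_eq_mul]
          refine mul_le_mul_of_nonneg_right ?_ (by positivity)
          have h2 : ({L+1, L+2} : Finset ℤ).card ≤ 2 :=
            le_trans (Finset.card_insert_le _ _) (by simp)
          exact_mod_cast h2
  have := add_le_add hpart1 hpart2
  linarith [this]

lemma exists_median {α : Type*} [MeasurableSpace α] (ν : Measure α) [IsFiniteMeasure ν]
    (g : α → ℝ) (hg : Measurable g) :
    ∃ m : ℝ, ν {x | m < g x} ≤ ν univ / 2 ∧ ν {x | g x < m} ≤ ν univ / 2 := by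
  rcases eq_or_ne (ν univ) 0 with h0 | h0
  · exact ⟨0, le_trans (le_trans (measure_mono (subset_univ _)) h0.le) zero_le,
      le_trans (le_trans (measure_mono (subset_univ _)) h0.le) zero_le⟩
  have hfin : ν univ ≠ ∞ := measure_ne_top ν univ
  have hhalfpos : 0 < ν univ / 2 := ENNReal.half_pos h0
  have hhalflt : ν univ / 2 < ν univ := ENNReal.half_lt_self h0 hfin
  set S : Set ℝ := {t : ℝ | ν {x | t < g x} ≤ ν univ / 2} with hS
  -- S is nonempty
  have hSne : S.Nonempty := by
    have hanti : Antitone (fun n : ℕ => {x | (n:ℝ) < g x}) := by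
      intro a b hab x hx
      simp only [mem_setOf_eq] at hx ⊢
      have hab' : (a:ℝ) ≤ b := by exact_mod_cast hab
      linarith
    have hint : ⋂ n : ℕ, {x | (n:ℝ) < g x} = ∅ := by
      ext x
      simp only [mem_iInter, mem_setOf_eq, mem_empty_iff_false, iff_false, not_forall, not_lt]
      obtain ⟨n, hn⟩ := exists_nat_ge (g x)
      exact ⟨n, hn⟩
    have htend : Tendsto (fun n : ℕ => ν {x | (n:ℝ) < g x}) atTop (𝓝 0) := by
      have := tendsto_measure_iInter_atTop
        (μ := ν) (s := fun n : ℕ => {x | (n:ℝ) < g x})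
        (fun n => (hg measurableSet_Ioi).nullMeasurableSet) hanti ⟨0, measure_ne_top _ _⟩
      rwa [hint, measure_empty] at this
    obtain ⟨n, hn⟩ := (htend.eventually_lt_const hhalfpos).exists
    exact ⟨n, hn.le⟩
  -- S is bounded below
  have hSbdd : BddBelow S := by
    have hmono : Monotone (fun n : ℕ => {x | (-(n:ℝ)) < g x}) := by
      intro a b hab x hx
      simp only [mem_setOf_eq] at hx ⊢
      have hab' : (a:ℝ) ≤ b := by exact_mod_cast hab
      linarith
    have huni : ⋃ n : ℕ, {x | (-(n:ℝ)) < g x} = univ := by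
      ext x
      simp only [mem_iUnion, mem_setOf_eq, mem_univ, iff_true]
      obtain ⟨n, hn⟩ := exists_nat_ge (-(g x))
      exact ⟨n + 1, by push_cast; linarith⟩
    have htend : Tendsto (fun n : ℕ => ν {x | (-(n:ℝ)) < g x}) atTop (𝓝 (ν univ)) := by
      have := tendsto_measure_iUnion_atTop (μ := ν) hmono
      rwa [huni] at this
    obtain ⟨n₀, hn₀⟩ := (htend.eventually_const_lt hhalflt).exists
    refine ⟨-(n₀:ℝ), fun t ht => ?_⟩
    by_contra hlt
    push_neg at hlt
    have : ν {x | (-(n₀:ℝ)) < g x} ≤ ν {x | t < g x} :=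
      measure_mono fun x hx => lt_trans hlt hx
    exact absurd (le_trans this ht) (not_le.mpr hn₀)
  set m : ℝ := sInf S with hm
  refine ⟨m, ?_, ?_⟩
  · have hset : {x | m < g x} = ⋃ n : ℕ, {x | m + 1/((n:ℝ)+1) < g x} := by
      ext x
      simp only [mem_setOf_eq, mem_iUnion]
      constructor
      · intro hx
        obtain ⟨n, hn⟩ := exists_nat_one_div_lt (sub_pos.mpr hx)
        exact ⟨n, by linarith⟩
      · rintro ⟨n, hn⟩
        have : 0 < 1/((n:ℝ)+1) := by positivity
        linarith
    rw [hset, Monotone.measure_iUnion]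
    · refine iSup_le fun n => ?_
      have h1 : 0 < 1/((n:ℝ)+1) := by positivity
      obtain ⟨t, htS, htlt⟩ := (csInf_lt_iff hSbdd hSne).mp (by linarith : sInf S < m + 1/((n:ℝ)+1))
      exact le_trans (measure_mono fun x hx => lt_trans htlt hx) htS
    · intro a b hab x hx
      simp only [mem_setOf_eq] at hx ⊢
      have hab' : (a:ℝ) ≤ b := by exact_mod_cast hab
      have h1 : 1/((b:ℝ)+1) ≤ 1/((a:ℝ)+1) :=
        one_div_le_one_div_of_le (by positivity) (by linarith)
      linarith
  · have hset : {x | g x < m} = ⋃ n : ℕ, {x | g x < m - 1/((n:ℝ)+1)} := by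
      ext x
      simp only [mem_setOf_eq, mem_iUnion]
      constructor
      · intro hx
        obtain ⟨n, hn⟩ := exists_nat_one_div_lt (sub_pos.mpr hx)
        exact ⟨n, by linarith⟩
      · rintro ⟨n, hn⟩
        have : 0 < 1/((n:ℝ)+1) := by positivity
        linarith
    rw [hset, Monotone.measure_iUnion]
    · refine iSup_le fun n => ?_
      have h1 : 0 < 1/((n:ℝ)+1) := by positivity
      set t : ℝ := m - 1/((n:ℝ)+1) with ht
      have htnot : t ∉ S := by
        intro hmem
        have h2 : m ≤ t := by rw [hm]; exact csInf_le hSbdd hmem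
        rw [ht] at h2
        linarith
      have hgt : ν univ / 2 < ν {x | t < g x} := lt_of_not_ge htnot
      have hcompl : {x | g x < t} = {x | t ≤ g x}ᶜ := by
        ext x; simp [not_le]
      have hms : MeasurableSet {x | t ≤ g x} := hg measurableSet_Ici
      rw [hcompl, measure_compl hms (measure_ne_top _ _)]
      have hsub2 : ν {x | t < g x} ≤ ν {x | t ≤ g x} := by
        refine measure_mono fun x hx => ?_
        simp only [mem_setOf_eq] at hx ⊢
        linarith
      calc ν univ - ν {x | t ≤ g x} ≤ ν univ - ν {x | t < g x} :=
            tsub_le_tsub_left hsub2 _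
      _ ≤ ν univ - ν univ / 2 := tsub_le_tsub_left hgt.le _
      _ = ν univ / 2 := ENNReal.sub_half hfin
    · intro a b hab x hx
      simp only [mem_setOf_eq] at hx ⊢
      have hab' : (a:ℝ) ≤ b := by exact_mod_cast hab
      have h1 : 1/((b:ℝ)+1) ≤ 1/((a:ℝ)+1) :=
        one_div_le_one_div_of_le (by positivity) (by linarith)
      linarith

lemma finset_sum_lintegral_le {α : Type*} [MeasurableSpace α] (μ : MeasureTheory.Measure α)
    {ι : Type*} (F : Finset ι) (f : ι → α → ℝ≥0∞) :
    ∑ i ∈ F, ∫⁻ a, f i a ∂μ ≤ ∫⁻ a, ∑ i ∈ F, f i a ∂μ := by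
  classical
  induction F using Finset.induction with
  | empty => simp
  | insert j F' hnot ih =>
    rw [Finset.sum_insert hnot]
    refine le_trans (add_le_add_right ih _) ?_
    refine le_trans (MeasureTheory.le_lintegral_add _ _) (le_of_eq ?_)
    congr 1
    ext a
    rw [Finset.sum_insert hnot]

section KernelSum

variable {n : ℕ} {δ τ p Cp : ℝ}

/-- pointwise bound for the sum of truncated kernels -/
lemma kernel_tsum_le (hp : 0 < p) (hCp : 0 ≤ Cp)
    (htr : ∀ r s : ℝ, 0 ≤ r → r ≤ s →
      ∀ F : Finset ℤ, ∑ k ∈ F, (Tr ((2:ℝ)^k) s - Tr ((2:ℝ)^k) r) ^ p ≤ Cp * (s - r) ^ p)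
    (g v : Eucl n → ℝ) (hv0 : ∀ x, 0 ≤ v x)
    (hlip : ∀ a b, |v a - v b| ≤ |g a - g b|) (x y : Eucl n) :
    ∑' k : ℤ, fracKernel n δ p (fun z => Tr ((2:ℝ)^k) (v z)) x y
      ≤ ENNReal.ofReal Cp * fracKernel n δ p g x y := by
  have hck : ∀ k : ℤ, (0:ℝ) ≤ (2:ℝ)^k := fun k => (zpow_pos two_pos k).le
  rcases eq_or_ne (dist x y) 0 with hxy | hxy
  · have hxy' : x = y := by rwa [dist_eq_zero] at hxy
    subst hxy'
    have hzero : ∀ k : ℤ, fracKernel n δ p (fun z => Tr ((2:ℝ)^k) (v z)) x x = 0 := by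
      intro k
      simp [fracKernel, sub_self, abs_zero, Real.zero_rpow hp.ne', zero_div]
    rw [tsum_congr hzero]
    simp
  have hD : 0 < dist x y ^ ((n:ℝ) + δ * p) :=
    Real.rpow_pos_of_pos (lt_of_le_of_ne dist_nonneg (Ne.symm hxy)) _
  set D : ℝ := dist x y ^ ((n:ℝ) + δ * p) with hDdef
  set r : ℝ := min (v x) (v y) with hrdef
  set s : ℝ := max (v x) (v y) with hsdef
  have hr0 : 0 ≤ r := le_min (hv0 x) (hv0 y)
  have hrs : r ≤ s := min_le_max
  have habs : ∀ k : ℤ, |Tr ((2:ℝ)^k) (v x) - Tr ((2:ℝ)^k) (v y)|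
      = Tr ((2:ℝ)^k) s - Tr ((2:ℝ)^k) r := by
    intro k
    rcases le_total (v x) (v y) with h | h
    · rw [abs_sub_comm, abs_of_nonneg (Tr_sub_nonneg h), hrdef, hsdef,
        min_eq_left h, max_eq_right h]
    · rw [abs_of_nonneg (Tr_sub_nonneg h), hrdef, hsdef, min_eq_right h, max_eq_left h]
  have hsr : s - r = |v x - v y| := by
    rcases le_total (v x) (v y) with h | h
    · rw [hrdef, hsdef, min_eq_left h, max_eq_right h, abs_sub_comm, abs_of_nonneg (by linarith)]
    · rw [hrdef, hsdef, min_eq_right h, max_eq_left h, abs_of_nonneg (by linarith)]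
  have htsum : ∑' k : ℤ, ENNReal.ofReal ((Tr ((2:ℝ)^k) s - Tr ((2:ℝ)^k) r) ^ p)
      ≤ ENNReal.ofReal (Cp * (s - r) ^ p) := by
    rw [ENNReal.tsum_eq_iSup_sum]
    refine iSup_le fun F => ?_
    rw [← ENNReal.ofReal_sum_of_nonneg (fun k _ => Real.rpow_nonneg (Tr_sub_nonneg hrs) p)]
    exact ENNReal.ofReal_le_ofReal (htr r s hr0 hrs F)
  calc ∑' k : ℤ, fracKernel n δ p (fun z => Tr ((2:ℝ)^k) (v z)) x y
      = ∑' k : ℤ, ENNReal.ofReal ((Tr ((2:ℝ)^k) s - Tr ((2:ℝ)^k) r) ^ p) * (ENNReal.ofReal D)⁻¹ := by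
        refine tsum_congr fun k => ?_
        rw [fracKernel, habs k, ENNReal.ofReal_div_of_pos hD, div_eq_mul_inv]
  _ = (∑' k : ℤ, ENNReal.ofReal ((Tr ((2:ℝ)^k) s - Tr ((2:ℝ)^k) r) ^ p)) * (ENNReal.ofReal D)⁻¹ :=
        ENNReal.tsum_mul_right
  _ ≤ ENNReal.ofReal (Cp * (s - r) ^ p) * (ENNReal.ofReal D)⁻¹ :=
        mul_le_mul_left htsum _
  _ ≤ ENNReal.ofReal (Cp * |g x - g y| ^ p) * (ENNReal.ofReal D)⁻¹ := by
        refine mul_le_mul_left (ENNReal.ofReal_le_ofReal ?_) _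
        refine mul_le_mul_of_nonneg_left ?_ hCp
        refine Real.rpow_le_rpow (by linarith [hsr, abs_nonneg (v x - v y)]) ?_ hp.le
        rw [hsr]; exact hlip x y
  _ = ENNReal.ofReal Cp * fracKernel n δ p g x y := by
        rw [fracKernel, ENNReal.ofReal_div_of_pos hD, ENNReal.ofReal_mul hCp, div_eq_mul_inv,
          mul_assoc]

/-- summing the truncated energies -/
lemma energy_tsum_le (hp : 0 < p) (hCp : 0 ≤ Cp)
    (htr : ∀ r s : ℝ, 0 ≤ r → r ≤ s →
      ∀ F : Finset ℤ, ∑ k ∈ F, (Tr ((2:ℝ)^k) s - Tr ((2:ℝ)^k) r) ^ p ≤ Cp * (s - r) ^ p)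
    (G : Set (Eucl n)) (g v : Eucl n → ℝ) (hv0 : ∀ x, 0 ≤ v x)
    (hlip : ∀ a b, |v a - v b| ≤ |g a - g b|) :
    ∑' k : ℤ, fracEnergyTau n δ τ p G (fun z => Tr ((2:ℝ)^k) (v z))
      ≤ ENNReal.ofReal Cp * fracEnergyTau n δ τ p G g := by
  rw [ENNReal.tsum_eq_iSup_sum]
  refine iSup_le fun F => ?_
  calc ∑ k ∈ F, fracEnergyTau n δ τ p G (fun z => Tr ((2:ℝ)^k) (v z))
      ≤ ∫⁻ x in G, ∑ k ∈ F, ∫⁻ y in tauBall n τ G x,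
          fracKernel n δ p (fun z => Tr ((2:ℝ)^k) (v z)) x y ∂volume ∂volume :=
        finset_sum_lintegral_le _ F _
  _ ≤ ∫⁻ x in G, ∫⁻ y in tauBall n τ G x, ENNReal.ofReal Cp * fracKernel n δ p g x y ∂volume ∂volume := by
        refine lintegral_mono fun x => ?_
        refine le_trans (finset_sum_lintegral_le _ F _) ?_
        refine lintegral_mono fun y => ?_
        refine le_trans (ENNReal.sum_le_tsum F) ?_
        exact kernel_tsum_le hp hCp htr g v hv0 hlip x y
  _ = ENNReal.ofReal Cp * fracEnergyTau n δ τ p G g := by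
        rw [fracEnergyTau]
        rw [← lintegral_const_mul' _ _ ENNReal.ofReal_ne_top]
        refine lintegral_congr fun x => ?_
        rw [← lintegral_const_mul' _ _ ENNReal.ofReal_ne_top]

end KernelSum

lemma tsum_rpow_le {ι : Type*} (a : ι → ℝ≥0∞) {r : ℝ} (hr : 1 ≤ r) :
    ∑' i, a i ^ r ≤ (∑' i, a i) ^ r := by
  set S := ∑' i, a i with hS
  rcases eq_or_ne S ∞ with h | h
  · rw [h, ENNReal.top_rpow_of_pos (by linarith)]; exact le_top
  rcases eq_or_ne S 0 with h0 | h0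
  · have : ∀ i, a i = 0 := fun i => le_antisymm (h0 ▸ ENNReal.le_tsum i) zero_le
    simp [this, ENNReal.zero_rpow_of_pos (by linarith : (0:ℝ) < r), h0]
  have key : ∀ i, a i ^ r ≤ a i * S ^ (r - 1) := by
    intro i
    rcases eq_or_ne (a i) 0 with hz | hz
    · simp [hz, ENNReal.zero_rpow_of_pos (by linarith : (0:ℝ) < r)]
    have hne : a i ≠ ∞ := fun hc => h (top_le_iff.mp (hc ▸ ENNReal.le_tsum i))
    calc a i ^ r = a i ^ (1 + (r - 1)) := by ring_nf
    _ = a i ^ (1:ℝ) * a i ^ (r - 1) := ENNReal.rpow_add _ _ hz hne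
    _ ≤ a i * S ^ (r - 1) := by
        rw [ENNReal.rpow_one]
        exact mul_le_mul_right (ENNReal.rpow_le_rpow (ENNReal.le_tsum i) (by linarith)) _
  calc ∑' i, a i ^ r ≤ ∑' i, a i * S ^ (r - 1) := ENNReal.tsum_le_tsum key
  _ = S * S ^ (r - 1) := by rw [ENNReal.tsum_mul_right]
  _ = S ^ (1:ℝ) * S ^ (r - 1) := by rw [ENNReal.rpow_one]
  _ = S ^ r := by rw [← ENNReal.rpow_add _ _ h0 h]; ring_nf
section HalfBound
open ENNReal

variable {n : ℕ} {δ τ p q C₁ Cp : ℝ}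

lemma half_bound {G : Set (Eucl n)} (hG : IsOpen G)
    (hp : 0 < p) (hq : 0 < q) (hqp : 1 ≤ q / p) (hCp : 0 < Cp) (hC₁ : 0 < C₁)
    (htr : ∀ r s : ℝ, 0 ≤ r → r ≤ s →
      ∀ F : Finset ℤ, ∑ k ∈ F, (Tr ((2:ℝ)^k) s - Tr ((2:ℝ)^k) r) ^ p ≤ Cp * (s - r) ^ p)
    (hA : ∀ u : Eucl n → ℝ, MemLp u ⊤ (volume.restrict G) →
      (⨅ a : ℝ, ⨆ (t : ℝ) (_ : 0 < t),
          volume {x ∈ G | t < |u x - a|} * ENNReal.ofReal (t ^ q))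
        ≤ ENNReal.ofReal C₁ * fracEnergyTau n δ τ p G u ^ (q / p))
    (g v : Eucl n → ℝ) (hvm : Measurable v) (hv0 : ∀ x, 0 ≤ v x)
    (hlip : ∀ a b, |v a - v b| ≤ |g a - g b|)
    (hmed : volume {x ∈ G | 0 < v x} ≤ volume {x ∈ G | v x = 0}) :
    ∫⁻ x in G, ENNReal.ofReal (v x ^ q) ∂volume
      ≤ ENNReal.ofReal ((16:ℝ)^q * Cp^(q/p) * C₁) * fracEnergyTau n δ τ p G g ^ (q/p) := by
  have hGm : MeasurableSet G := hG.measurableSet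
  have hck : ∀ k : ℤ, (0:ℝ) < (2:ℝ)^k := fun k => zpow_pos two_pos k
  set ν := volume.restrict G with hν
  set E := fracEnergyTau n δ τ p G g with hE
  set vk : ℤ → Eucl n → ℝ := fun k z => Tr ((2:ℝ)^k) (v z) with hvk
  have hνeq : ∀ P : Eucl n → Prop, volume {x ∈ G | P x} = ν {x | P x} := by
    intro P
    rw [hν, Measure.restrict_apply' hGm]
    congr 1
    ext x
    simp only [Set.mem_inter_iff, Set.mem_setOf_eq, Set.mem_sep_iff]
    tauto
  have hvk_meas : ∀ k : ℤ, Measurable (vk k) := by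
    intro k
    have hTr : Continuous (Tr ((2:ℝ)^k)) :=
      ((continuous_id.sub continuous_const).max continuous_const).min continuous_const
    exact hTr.measurable.comp hvm
  have hmem : ∀ k : ℤ, MemLp (vk k) ⊤ ν := by
    intro k
    refine memLp_top_of_bound ((hvk_meas k).aestronglyMeasurable) ((2:ℝ)^k)
      (Filter.Eventually.of_forall fun x => ?_)
    rw [Real.norm_eq_abs, abs_of_nonneg (Tr_nonneg (hck k).le)]
    exact min_le_right _ _
  -- the weak-type bound for each truncation
  have hweak : ∀ k : ℤ,
      ENNReal.ofReal (((2:ℝ)^(k-2))^q) * volume {x ∈ G | (2:ℝ)^(k+1) ≤ v x}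
        ≤ ENNReal.ofReal C₁ * fracEnergyTau n δ τ p G (vk k) ^ (q/p) := by
    intro k
    refine le_trans ?_ (hA (vk k) (hmem k))
    refine le_iInf fun a => ?_
    refine le_iSup_of_le ((2:ℝ)^(k-2)) ?_
    refine le_iSup_of_le (hck (k-2)) ?_
    have he1 : (2:ℝ)^(k) = 2 * (2:ℝ)^(k-1) := by
      calc (2:ℝ)^(k) = (2:ℝ)^((1:ℤ)+(k-1)) := by congr 1; omega
      _ = (2:ℝ)^(1:ℤ) * (2:ℝ)^(k-1) := zpow_add₀ (two_ne_zero : (2:ℝ) ≠ 0) _ _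
      _ = 2 * (2:ℝ)^(k-1) := by norm_num
    have he2 : (2:ℝ)^(k-1) = 2 * (2:ℝ)^(k-2) := by
      calc (2:ℝ)^(k-1) = (2:ℝ)^((1:ℤ)+(k-2)) := by congr 1; omega
      _ = (2:ℝ)^(1:ℤ) * (2:ℝ)^(k-2) := zpow_add₀ (two_ne_zero : (2:ℝ) ≠ 0) _ _
      _ = 2 * (2:ℝ)^(k-2) := by norm_num
    have he3 : (2:ℝ)^(k+1) = 2 * (2:ℝ)^(k) := by
      calc (2:ℝ)^(k+1) = (2:ℝ)^((1:ℤ)+(k)) := by congr 1; omega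
      _ = (2:ℝ)^(1:ℤ) * (2:ℝ)^(k) := zpow_add₀ (two_ne_zero : (2:ℝ) ≠ 0) _ _
      _ = 2 * (2:ℝ)^(k) := by norm_num
    have hμ : volume {x ∈ G | (2:ℝ)^(k+1) ≤ v x}
        ≤ volume {x ∈ G | (2:ℝ)^(k-2) < |vk k x - a|} := by
      rcases le_or_gt ((2:ℝ)^(k-1)) |a| with ha | ha
      · refine le_trans (le_trans (measure_mono ?_) hmed) (measure_mono ?_)
        · exact fun x hx => ⟨hx.1, lt_of_lt_of_le (hck (k+1)) hx.2⟩
        · intro x hx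
          refine ⟨hx.1, ?_⟩
          have hz : vk k x = 0 := by
            show Tr ((2:ℝ)^k) (v x) = 0
            rw [hx.2]
            exact Tr_eq_zero (hck k).le (hck k).le
          rw [hz]
          rw [zero_sub, abs_neg]
          linarith [hck (k-2), hck (k-1)]
      · refine measure_mono fun x hx => ⟨hx.1, ?_⟩
        have hvkx : vk k x = (2:ℝ)^k := by
          show Tr ((2:ℝ)^k) (v x) = (2:ℝ)^k
          refine Tr_eq_c (hck k).le ?_
          rw [← he3]
          exact hx.2
        rw [hvkx]
        have habs : (2:ℝ)^k - |a| ≤ |(2:ℝ)^k - a| := by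
          have h1 : |(2:ℝ)^k| - |a| ≤ |(2:ℝ)^k - a| := abs_sub_abs_le_abs_sub _ _
          rwa [abs_of_nonneg (hck k).le] at h1
        linarith [hck (k-2)]
    calc ENNReal.ofReal (((2:ℝ)^(k-2))^q) * volume {x ∈ G | (2:ℝ)^(k+1) ≤ v x}
        ≤ ENNReal.ofReal (((2:ℝ)^(k-2))^q)
            * volume {x ∈ G | (2:ℝ)^(k-2) < |vk k x - a|} := mul_le_mul_right hμ _
    _ = volume {x ∈ G | (2:ℝ)^(k-2) < |vk k x - a|}
            * ENNReal.ofReal (((2:ℝ)^(k-2))^q) := mul_comm _ _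
  -- layer-cake decomposition
  have hlayer : ∫⁻ x in G, ENNReal.ofReal (v x ^ q) ∂volume
      ≤ ∑' k : ℤ, ENNReal.ofReal (((2:ℝ)^(k+2))^q)
          * volume {x ∈ G | (2:ℝ)^(k+1) ≤ v x} := by
    set A : ℤ → Set (Eucl n) := fun k => v ⁻¹' (Set.Ico ((2:ℝ)^(k+1)) ((2:ℝ)^(k+2))) with hA'
    have hAm : ∀ k, MeasurableSet (A k) := fun k => hvm measurableSet_Ico
    have hpt : ∀ x, ENNReal.ofReal (v x ^ q)
        ≤ ∑' k : ℤ, (A k).indicator (fun _ => ENNReal.ofReal (((2:ℝ)^(k+2))^q)) x := by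
      intro x
      rcases eq_or_lt_of_le (hv0 x) with h0 | h0
      · rw [← h0]
        simp [Real.zero_rpow hq.ne']
      · set L : ℤ := Int.log 2 (v x) with hL
        have h1 : (2:ℝ)^L ≤ v x := by exact_mod_cast Int.zpow_log_le_self one_lt_two h0
        have h2 : v x < (2:ℝ)^(L+1) := by exact_mod_cast Int.lt_zpow_succ_log_self one_lt_two (v x)
        refine le_trans ?_ (ENNReal.le_tsum (L-1))
        have hmem' : x ∈ A (L-1) := by
          constructor
          · show (2:ℝ)^(L-1+1) ≤ v x
            rw [(by omega : L - 1 + 1 = L)]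
            exact h1
          · show v x < (2:ℝ)^(L-1+2)
            rw [(by omega : L - 1 + 2 = L + 1)]
            exact h2
        rw [Set.indicator_of_mem hmem']
        refine ENNReal.ofReal_le_ofReal ?_
        refine Real.rpow_le_rpow (hv0 x) ?_ hq.le
        rw [(by omega : L - 1 + 2 = L + 1)]
        exact h2.le
    calc ∫⁻ x in G, ENNReal.ofReal (v x ^ q) ∂volume
        ≤ ∫⁻ x in G, ∑' k : ℤ, (A k).indicator
            (fun _ => ENNReal.ofReal (((2:ℝ)^(k+2))^q)) x ∂volume := lintegral_mono hpt
    _ = ∑' k : ℤ, ∫⁻ x in G, (A k).indicator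
            (fun _ => ENNReal.ofReal (((2:ℝ)^(k+2))^q)) x ∂volume :=
          lintegral_tsum fun k => (measurable_const.indicator (hAm k)).aemeasurable
    _ ≤ ∑' k : ℤ, ENNReal.ofReal (((2:ℝ)^(k+2))^q)
            * volume {x ∈ G | (2:ℝ)^(k+1) ≤ v x} := by
          refine ENNReal.tsum_le_tsum fun k => ?_
          rw [lintegral_indicator_const (hAm k)]
          refine mul_le_mul_right ?_ _
          rw [hνeq (fun x => (2:ℝ)^(k+1) ≤ v x)]
          exact measure_mono fun x hx => hx.1
  -- identity (2^(k+2))^q = 16^q * (2^(k-2))^q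
  have hid : ∀ k : ℤ, ENNReal.ofReal (((2:ℝ)^(k+2))^q)
      = ENNReal.ofReal ((16:ℝ)^q) * ENNReal.ofReal (((2:ℝ)^(k-2))^q) := by
    intro k
    rw [← ENNReal.ofReal_mul (by positivity)]
    congr 1
    rw [← Real.mul_rpow (by norm_num) (hck (k-2)).le]
    congr 1
    rw [(by norm_num : (16:ℝ) = (2:ℝ)^(4:ℤ)), ← zpow_add₀ (two_ne_zero : (2:ℝ) ≠ 0)]
    congr 1
    omega
  have henergy : ∑' k : ℤ, fracEnergyTau n δ τ p G (vk k) ≤ ENNReal.ofReal Cp * E :=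
    energy_tsum_le hp hCp.le htr G g v hv0 hlip
  calc ∫⁻ x in G, ENNReal.ofReal (v x ^ q) ∂volume
      ≤ ∑' k : ℤ, ENNReal.ofReal (((2:ℝ)^(k+2))^q)
          * volume {x ∈ G | (2:ℝ)^(k+1) ≤ v x} := hlayer
  _ = ENNReal.ofReal ((16:ℝ)^q) * ∑' k : ℤ, ENNReal.ofReal (((2:ℝ)^(k-2))^q)
          * volume {x ∈ G | (2:ℝ)^(k+1) ≤ v x} := by
        rw [← ENNReal.tsum_mul_left]
        refine tsum_congr fun k => ?_
        rw [hid k, mul_assoc]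
  _ ≤ ENNReal.ofReal ((16:ℝ)^q) * ∑' k : ℤ,
          ENNReal.ofReal C₁ * fracEnergyTau n δ τ p G (vk k) ^ (q/p) :=
        mul_le_mul_right (ENNReal.tsum_le_tsum hweak) _
  _ = ENNReal.ofReal ((16:ℝ)^q) * (ENNReal.ofReal C₁
          * ∑' k : ℤ, fracEnergyTau n δ τ p G (vk k) ^ (q/p)) := by
        rw [ENNReal.tsum_mul_left]
  _ ≤ ENNReal.ofReal ((16:ℝ)^q) * (ENNReal.ofReal C₁
          * (∑' k : ℤ, fracEnergyTau n δ τ p G (vk k)) ^ (q/p)) := by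
        refine mul_le_mul_right (mul_le_mul_right ?_ _) _
        exact tsum_rpow_le _ hqp
  _ ≤ ENNReal.ofReal ((16:ℝ)^q) * (ENNReal.ofReal C₁ * (ENNReal.ofReal Cp * E) ^ (q/p)) := by
        refine mul_le_mul_right (mul_le_mul_right ?_ _) _
        exact ENNReal.rpow_le_rpow henergy (by linarith)
  _ = ENNReal.ofReal ((16:ℝ)^q * Cp^(q/p) * C₁) * E ^ (q/p) := by
        rw [ENNReal.mul_rpow_of_nonneg _ _ (by linarith : (0:ℝ) ≤ q/p),
          ENNReal.ofReal_rpow_of_pos hCp,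
          ENNReal.ofReal_mul (by positivity), ENNReal.ofReal_mul (by positivity)]
        ring

end HalfBound

end AuxProofs

lemma half_le_of_add_eq {a b tot : ℝ≥0∞} (htot : tot ≠ ∞) (hsum : a + b = tot)
    (hb : b ≤ tot / 2) : tot / 2 ≤ a := by
  by_contra hcon
  push_neg at hcon
  have hbne : b ≠ ∞ := ne_top_of_le_ne_top (ne_top_of_le_ne_top htot ENNReal.half_le_self) hb
  have hlt : tot < tot := by
    calc tot = a + b := hsum.symm
    _ < tot / 2 + tot / 2 := ENNReal.add_lt_add_of_lt_of_le hbne hcon hb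
    _ = tot := ENNReal.add_halves _
  exact absurd hlt (lt_irrefl _)

/-- For an open set `G ⊆ ℝⁿ` of finite measure, `0 < δ, τ < 1` and
`0 < p ≤ q < ∞`, the weak-type inequality (A) and the strong-type inequality (B) for the
truncated fractional energy are equivalent; in the implication (A) → (B) one can take
`C₂ = C(p,q)·C₁` with `C(p,q)` depending only on `p` and `q`, and in (B) → (A) `C₁ = C₂`. -/
theorem statement4 (p q : ℝ) (hp : 0 < p) (hpq : p ≤ q) :
    ∃ K : ℝ, 0 < K ∧
      ∀ (n : ℕ) (G : Set (Eucl n)), IsOpen G → volume G < ⊤ →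
        ∀ δ τ : ℝ, δ ∈ Ioo (0:ℝ) 1 → τ ∈ Ioo (0:ℝ) 1 →
          (∀ C₁ : ℝ, 0 < C₁ →
            (∀ u : Eucl n → ℝ, MemLp u ⊤ (volume.restrict G) →
              (⨅ a : ℝ, ⨆ (t : ℝ) (_ : 0 < t),
                  volume {x ∈ G | t < |u x - a|} * ENNReal.ofReal (t ^ q))
                ≤ ENNReal.ofReal C₁ * fracEnergyTau n δ τ p G u ^ (q / p)) →
            (∀ u : Eucl n → ℝ, IntegrableOn u G volume →
              (⨅ a : ℝ, ∫⁻ x in G, ENNReal.ofReal (|u x - a| ^ q) ∂volume)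
                ≤ ENNReal.ofReal (K * C₁) * fracEnergyTau n δ τ p G u ^ (q / p))) ∧
          (∀ C₂ : ℝ, 0 < C₂ →
            (∀ u : Eucl n → ℝ, IntegrableOn u G volume →
              (⨅ a : ℝ, ∫⁻ x in G, ENNReal.ofReal (|u x - a| ^ q) ∂volume)
                ≤ ENNReal.ofReal C₂ * fracEnergyTau n δ τ p G u ^ (q / p)) →
            (∀ u : Eucl n → ℝ, MemLp u ⊤ (volume.restrict G) →
              (⨅ a : ℝ, ⨆ (t : ℝ) (_ : 0 < t),
                  volume {x ∈ G | t < |u x - a|} * ENNReal.ofReal (t ^ q))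
                ≤ ENNReal.ofReal C₂ * fracEnergyTau n δ τ p G u ^ (q / p))) := by
  obtain ⟨Cp, hCp, htr⟩ := trunc_sum p hp
  have hq : 0 < q := lt_of_lt_of_le hp hpq
  have hqp : 1 ≤ q / p := (one_le_div hp).mpr hpq
  refine ⟨2 * (16:ℝ)^q * Cp^(q/p), by positivity, ?_⟩
  intro n G hG hGfin δ τ hδ hτ
  have hGm : MeasurableSet G := hG.measurableSet
  have hνeq : ∀ P : Eucl n → Prop,
      volume {x ∈ G | P x} = (volume.restrict G) {x | P x} := by
    intro P
    rw [Measure.restrict_apply' hGm]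
    congr 1
    ext x
    simp only [Set.mem_inter_iff, Set.mem_setOf_eq, Set.mem_sep_iff]
    tauto
  haveI : IsFiniteMeasure (volume.restrict G) :=
    ⟨by rwa [Measure.restrict_apply_univ]⟩
  constructor
  · -- (A) → (B)
    intro C₁ hC₁ hA u hu
    rcases eq_or_ne (volume G) 0 with hν0 | hν0
    · refine le_trans (iInf_le _ 0) ?_
      rw [Measure.restrict_eq_zero.mpr hν0, lintegral_zero_measure]
      exact zero_le
    -- measurable representative
    have hmeas : AEMeasurable u (volume.restrict G) := hu.aemeasurable
    set g : Eucl n → ℝ := hmeas.mk u with hgdef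
    have hgm : Measurable g := hmeas.measurable_mk
    have hug : u =ᵐ[volume.restrict G] g := hmeas.ae_eq_mk
    -- median of g
    obtain ⟨m, hm1, hm2⟩ := exists_median (volume.restrict G) g hgm
    set v : Eucl n → ℝ := fun x => max (g x - m) 0 with hvdef
    set w : Eucl n → ℝ := fun x => max (m - g x) 0 with hwdef
    have hvm : Measurable v := (hgm.sub measurable_const).max measurable_const
    have hwm : Measurable w := (measurable_const.sub hgm).max measurable_const
    have hv0 : ∀ x, 0 ≤ v x := fun x => le_max_right _ _
    have hw0 : ∀ x, 0 ≤ w x := fun x => le_max_right _ _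
    have hvlip : ∀ a b, |v a - v b| ≤ |g a - g b| := by
      intro a b
      refine le_trans (abs_max_sub_max_le_abs _ _ _) ?_
      simp only [sub_sub_sub_cancel_right, le_refl]
    have hwlip : ∀ a b, |w a - w b| ≤ |g a - g b| := by
      intro a b
      refine le_trans (abs_max_sub_max_le_abs _ _ _) ?_
      rw [show m - g a - (m - g b) = -(g a - g b) by ring, abs_neg]
    -- energies agree
    have hEE : fracEnergyTau n δ τ p G g = fracEnergyTau n δ τ p G u := by
      have hball_m : ∀ x : Eucl n, MeasurableSet (tauBall n τ G x) := by
        intro x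
        have : IsOpen (tauBall n τ G x) :=
          isOpen_lt (continuous_const.edist continuous_id) continuous_const
        exact this.measurableSet
      have hnull : volume ({y | u y ≠ g y} ∩ G) = 0 := by
        have h1 : (volume.restrict G) {y | u y ≠ g y} = 0 := hug
        rwa [Measure.restrict_apply' hGm] at h1
      refine lintegral_congr_ae ?_
      filter_upwards [hug, ae_restrict_mem hGm] with x hx hxG
      refine lintegral_congr_ae ?_
      have hnull2 : (volume.restrict (tauBall n τ G x)) {y | ¬ (u y = g y)} = 0 := by
        rw [Measure.restrict_apply' (hball_m x)]
        refine measure_mono_null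
          (Set.inter_subset_inter_right _ (tauBall_subset hτ.2.le hG hxG)) hnull
      filter_upwards [ae_iff.mpr hnull2] with y hy
      simp only [fracKernel, hx, hy]
    -- pointwise splitting
    have hsplit : ∀ x, ENNReal.ofReal (|g x - m| ^ q)
        = ENNReal.ofReal (v x ^ q) + ENNReal.ofReal (w x ^ q) := by
      intro x
      rcases le_total m (g x) with h | h
      · have hv : v x = g x - m := max_eq_left (by linarith)
        have hw : w x = 0 := max_eq_right (by linarith)
        rw [hv, hw, abs_of_nonneg (by linarith), Real.zero_rpow hq.ne']
        simp
      · have hv : v x = 0 := max_eq_right (by linarith)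
        have hw : w x = m - g x := max_eq_left (by linarith)
        rw [hv, hw, abs_of_nonpos (by linarith), Real.zero_rpow hq.ne']
        simp [neg_sub]
    -- median conditions
    have hmedv : volume {x ∈ G | 0 < v x} ≤ volume {x ∈ G | v x = 0} := by
      have hs1 : {x : Eucl n | 0 < v x} = {x | m < g x} := by
        ext x
        simp only [Set.mem_setOf_eq, hvdef, lt_max_iff, lt_irrefl, or_false, sub_pos]
      have hs2 : {x : Eucl n | v x = 0} = {x | g x ≤ m} := by
        ext x
        simp only [Set.mem_setOf_eq, hvdef, max_eq_right_iff, sub_nonpos]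
      have hcompl : (volume.restrict G) {x | g x ≤ m} + (volume.restrict G) {x | m < g x}
          = (volume.restrict G) Set.univ := by
        have hmset : MeasurableSet {x : Eucl n | g x ≤ m} := hgm measurableSet_Iic
        have := measure_add_measure_compl (μ := volume.restrict G) hmset
        convert this using 3
        ext x
        simp [not_le]
      have hge : (volume.restrict G) Set.univ / 2 ≤ (volume.restrict G) {x | g x ≤ m} :=
        half_le_of_add_eq (measure_ne_top _ _) hcompl hm1
      rw [hνeq, hνeq, hs1, hs2]
      exact le_trans hm1 hge
    have hmedw : volume {x ∈ G | 0 < w x} ≤ volume {x ∈ G | w x = 0} := by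
      have hs1 : {x : Eucl n | 0 < w x} = {x | g x < m} := by
        ext x
        simp only [Set.mem_setOf_eq, hwdef, lt_max_iff, lt_irrefl, or_false, sub_pos]
      have hs2 : {x : Eucl n | w x = 0} = {x | m ≤ g x} := by
        ext x
        simp only [Set.mem_setOf_eq, hwdef, max_eq_right_iff, sub_nonpos]
      have hcompl : (volume.restrict G) {x | m ≤ g x} + (volume.restrict G) {x | g x < m}
          = (volume.restrict G) Set.univ := by
        have hmset : MeasurableSet {x : Eucl n | m ≤ g x} := hgm measurableSet_Ici
        have := measure_add_measure_compl (μ := volume.restrict G) hmset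
        convert this using 3
        ext x
        simp [not_le]
      have hge : (volume.restrict G) Set.univ / 2 ≤ (volume.restrict G) {x | m ≤ g x} :=
        half_le_of_add_eq (measure_ne_top _ _) hcompl hm2
      rw [hνeq, hνeq, hs1, hs2]
      exact le_trans hm2 hge
    -- apply half_bound to v and w
    have hv_bound := half_bound hG hp hq hqp hCp hC₁ htr hA g v hvm hv0 hvlip hmedv
    have hw_bound := half_bound hG hp hq hqp hCp hC₁ htr hA g w hwm hw0 hwlip hmedw
    calc ⨅ a : ℝ, ∫⁻ x in G, ENNReal.ofReal (|u x - a| ^ q) ∂volume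
        ≤ ∫⁻ x in G, ENNReal.ofReal (|u x - m| ^ q) ∂volume := iInf_le _ m
    _ = ∫⁻ x in G, ENNReal.ofReal (|g x - m| ^ q) ∂volume := by
        refine lintegral_congr_ae ?_
        filter_upwards [hug] with x hx
        rw [hx]
    _ = (∫⁻ x in G, ENNReal.ofReal (v x ^ q) ∂volume)
          + ∫⁻ x in G, ENNReal.ofReal (w x ^ q) ∂volume := by
        have hmv : Measurable (fun x => ENNReal.ofReal (v x ^ q)) :=
          ENNReal.measurable_ofReal.comp ((Real.continuous_rpow_const hq.le).measurable.comp hvm)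
        rw [← lintegral_add_left hmv]
        exact lintegral_congr fun x => hsplit x
    _ ≤ ENNReal.ofReal ((16:ℝ)^q * Cp^(q/p) * C₁) * fracEnergyTau n δ τ p G g ^ (q/p)
          + ENNReal.ofReal ((16:ℝ)^q * Cp^(q/p) * C₁) * fracEnergyTau n δ τ p G g ^ (q/p) :=
        add_le_add hv_bound hw_bound
    _ = ENNReal.ofReal (2 * (16:ℝ)^q * Cp^(q/p) * C₁) * fracEnergyTau n δ τ p G u ^ (q/p) := by
        rw [hEE]
        rw [← two_mul, ← mul_assoc, ← ENNReal.ofReal_ofNat,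
          ← ENNReal.ofReal_mul (by norm_num)]
        ring_nf
  · -- (B) → (A)
    intro C₂ hC₂ hB u hu
    have hint : IntegrableOn u G volume := by
      have h1 : MemLp u 1 (volume.restrict G) := hu.mono_exponent le_top
      exact (memLp_one_iff_integrable.mp h1)
    refine le_trans ?_ (hB u hint)
    refine iInf_mono fun a => ?_
    refine iSup_le fun t => iSup_le fun ht => ?_
    have hf_meas : AEMeasurable (fun x => ENNReal.ofReal (|u x - a| ^ q))
        (volume.restrict G) := by
      have h1 : AEMeasurable u (volume.restrict G) := hu.aestronglyMeasurable.aemeasurable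
      have hcont : Continuous (fun y : ℝ => ENNReal.ofReal (|y - a| ^ q)) :=
        ENNReal.continuous_ofReal.comp ((Real.continuous_rpow_const hq.le).comp
          ((continuous_id.sub continuous_const).abs))
      exact hcont.measurable.comp_aemeasurable h1
    have hcheb := mul_meas_ge_le_lintegral₀ hf_meas (ENNReal.ofReal (t ^ q))
    calc volume {x ∈ G | t < |u x - a|} * ENNReal.ofReal (t ^ q)
        ≤ (volume.restrict G) {x | ENNReal.ofReal (t ^ q)
            ≤ ENNReal.ofReal (|u x - a| ^ q)} * ENNReal.ofReal (t ^ q) := by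
          refine mul_le_mul_left ?_ _
          rw [hνeq]
          refine measure_mono fun x hx => ?_
          simp only [Set.mem_setOf_eq] at hx ⊢
          exact ENNReal.ofReal_le_ofReal
            (Real.rpow_le_rpow ht.le hx.le hq.le)
    _ = ENNReal.ofReal (t ^ q) * (volume.restrict G) {x | ENNReal.ofReal (t ^ q)
            ≤ ENNReal.ofReal (|u x - a| ^ q)} := mul_comm _ _
    _ ≤ ∫⁻ x in G, ENNReal.ofReal (|u x - a| ^ q) ∂volume := hcheb
end

section
/- Suppose G is an open set in ℝⁿ, and let 0 < p < ∞ and 0 < τ, δ < 1 be given. Let K be a compact subset of G. If u is a measurable function on G with |u|_{W^{δ,p}_τ(G)} < ∞, then u ∈ L^p(K), i.e. ∫_K |u(y)|^p dy < ∞. -/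
open MeasureTheory Metric Set
open scoped ENNReal NNReal BigOperators

lemma local_ball_bound (n : ℕ) (G : Set (Eucl n)) (p τ δ : ℝ) (hp : 0 < p)
    (hδ : 0 < δ) (u : Eucl n → ℝ) (hu : Measurable u)
    (hfin : fracEnergyTau n δ τ p G u < ⊤)
    (x₀ : Eucl n) (ρ : ℝ) (hρ : 0 < ρ) (hBG : ball x₀ ρ ⊆ G)
    (htau : ∀ x ∈ ball x₀ ρ, ball x₀ ρ ⊆ tauBall n τ G x) :
    (∫⁻ y in ball x₀ ρ, ENNReal.ofReal (|u y| ^ p) ∂volume) < ⊤ := by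
  set B := ball x₀ ρ with hB
  set e : ℝ := (n : ℝ) + δ * p with he
  have he0 : 0 ≤ e := by positivity
  set C : ℝ := (2 * ρ) ^ e with hC
  have hC0 : 0 < C := Real.rpow_pos_of_pos (by linarith) e
  -- the double integral over B × B of the kernel is finite
  have hI : (∫⁻ x in B, ∫⁻ y in B, fracKernel n δ p u x y ∂volume ∂volume) < ⊤ := by
    refine lt_of_le_of_lt ?_ hfin
    calc (∫⁻ x in B, ∫⁻ y in B, fracKernel n δ p u x y ∂volume ∂volume)
        ≤ ∫⁻ x in B, ∫⁻ y in tauBall n τ G x, fracKernel n δ p u x y ∂volume ∂volume := by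
          refine setLIntegral_mono' measurableSet_ball fun x hx => ?_
          exact lintegral_mono_set (htau x hx)
      _ ≤ _ := lintegral_mono_set hBG
  -- pointwise kernel lower bound
  have hpt : ∀ x ∈ B, ∀ y ∈ B,
      (ENNReal.ofReal C)⁻¹ * ENNReal.ofReal (|u x - u y| ^ p) ≤ fracKernel n δ p u x y := by
    intro x hx y hy
    have h1 : (ENNReal.ofReal C)⁻¹ * ENNReal.ofReal (|u x - u y| ^ p)
        = ENNReal.ofReal (|u x - u y| ^ p / C) := by
      rw [ENNReal.ofReal_div_of_pos hC0, div_eq_mul_inv, mul_comm]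
    rw [h1, fracKernel]
    apply ENNReal.ofReal_le_ofReal
    rcases eq_or_ne (dist x y) 0 with h0 | h0
    · have : x = y := by rwa [dist_eq_zero] at h0
      subst this
      simp [Real.zero_rpow hp.ne']
    · have hd : 0 < dist x y := lt_of_le_of_ne dist_nonneg (Ne.symm h0)
      have hde : dist x y ^ e ≤ C := by
        apply Real.rpow_le_rpow dist_nonneg _ he0
        have := dist_triangle x x₀ y
        rw [mem_ball] at hx hy
        rw [dist_comm y x₀] at hy
        nlinarith [dist_comm x x₀ ▸ hx]
      exact div_le_div_of_nonneg_left (by positivity) (Real.rpow_pos_of_pos hd e) hde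
  -- the difference integral is finite
  have hJ : (∫⁻ x in B, ∫⁻ y in B, ENNReal.ofReal (|u x - u y| ^ p) ∂volume ∂volume) < ⊤ := by
    set J := ∫⁻ x in B, ∫⁻ y in B, ENNReal.ofReal (|u x - u y| ^ p) ∂volume ∂volume with hJdef
    have hcne : ENNReal.ofReal C ≠ 0 := by
      simp [ENNReal.ofReal_eq_zero, not_le, hC0]
    have hcnt : ENNReal.ofReal C ≠ ⊤ := ENNReal.ofReal_ne_top
    have hinv : (ENNReal.ofReal C)⁻¹ ≠ ⊤ := by simp [hcne]
    have key : (ENNReal.ofReal C)⁻¹ * J ≤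
        ∫⁻ x in B, ∫⁻ y in B, fracKernel n δ p u x y ∂volume ∂volume := by
      rw [hJdef, ← lintegral_const_mul' _ _ hinv]
      refine setLIntegral_mono' measurableSet_ball fun x hx => ?_
      rw [← lintegral_const_mul' _ _ hinv]
      exact setLIntegral_mono' measurableSet_ball fun y hy => hpt x hx y hy
    have : J = ENNReal.ofReal C * ((ENNReal.ofReal C)⁻¹ * J) := by
      rw [← mul_assoc, ENNReal.mul_inv_cancel hcne hcnt, one_mul]
    rw [this]
    exact ENNReal.mul_lt_top hcnt.lt_top (lt_of_le_of_lt key hI)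
  -- pick a good point x ∈ B
  have hFmeas : Measurable fun x => ∫⁻ y in B, ENNReal.ofReal (|u x - u y| ^ p) ∂volume := by
    apply Measurable.lintegral_prod_right (f := fun x y => ENNReal.ofReal (|u x - u y| ^ p))
    exact ENNReal.measurable_ofReal.comp
      ((((hu.comp measurable_fst).sub (hu.comp measurable_snd)).abs).pow_const p)
  have hae : ∀ᵐ x ∂(volume.restrict B),
      (∫⁻ y in B, ENNReal.ofReal (|u x - u y| ^ p) ∂volume) < ⊤ :=
    ae_lt_top hFmeas hJ.ne
  have hne : volume.restrict B ≠ 0 := by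
    rw [Ne, Measure.restrict_eq_zero]
    exact (measure_ball_pos volume x₀ hρ).ne'
  have : ∃ x, x ∈ B ∧ (∫⁻ y in B, ENNReal.ofReal (|u x - u y| ^ p) ∂volume) < ⊤ := by
    have hmem : ∀ᵐ x ∂(volume.restrict B), x ∈ B := ae_restrict_mem measurableSet_ball
    haveI : (ae (volume.restrict B)).NeBot := MeasureTheory.ae_neBot.2 hne
    exact (hmem.and hae).exists
  obtain ⟨x, hxB, hFx⟩ := this
  -- conclude
  have hptwise : ∀ y : Eucl n, ENNReal.ofReal (|u y| ^ p) ≤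
      ENNReal.ofReal ((2:ℝ) ^ p) *
        (ENNReal.ofReal (|u x - u y| ^ p) + ENNReal.ofReal (|u x| ^ p)) := by
    intro y
    rw [← ENNReal.ofReal_add (by positivity) (by positivity),
      ← ENNReal.ofReal_mul (by positivity)]
    apply ENNReal.ofReal_le_ofReal
    set a := |u x - u y| with ha
    set b := |u x| with hb
    have ha0 : 0 ≤ a := abs_nonneg _
    have hb0 : 0 ≤ b := abs_nonneg _
    have h1 : |u y| ≤ a + b := by
      have : u y = u x - (u x - u y) := by ring
      rw [this]
      calc |u x - (u x - u y)| ≤ |u x| + |u x - u y| := abs_sub _ _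
        _ = a + b := by ring
    have h2 : a + b ≤ 2 * max a b := by
      rcases le_total a b with h | h
      · simp [max_eq_right h]; linarith
      · simp [max_eq_left h]; linarith
    calc |u y| ^ p ≤ (2 * max a b) ^ p :=
          Real.rpow_le_rpow (abs_nonneg _) (le_trans h1 h2) hp.le
      _ = 2 ^ p * (max a b) ^ p :=
          Real.mul_rpow (by norm_num) (le_max_of_le_left ha0)
      _ ≤ 2 ^ p * (a ^ p + b ^ p) := by
          apply mul_le_mul_of_nonneg_left _ (by positivity)
          rcases le_total a b with h | h
          · rw [max_eq_right h]
            have := Real.rpow_nonneg ha0 p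
            linarith
          · rw [max_eq_left h]
            have := Real.rpow_nonneg hb0 p
            linarith
  calc (∫⁻ y in B, ENNReal.ofReal (|u y| ^ p) ∂volume)
      ≤ ∫⁻ y in B, ENNReal.ofReal ((2:ℝ) ^ p) *
          (ENNReal.ofReal (|u x - u y| ^ p) + ENNReal.ofReal (|u x| ^ p)) ∂volume :=
        lintegral_mono fun y => hptwise y
    _ = ENNReal.ofReal ((2:ℝ) ^ p) *
          ((∫⁻ y in B, ENNReal.ofReal (|u x - u y| ^ p) ∂volume) +
            (∫⁻ y in B, ENNReal.ofReal (|u x| ^ p) ∂volume)) := by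
        rw [lintegral_const_mul' _ _ ENNReal.ofReal_ne_top, lintegral_add_left]
        exact ENNReal.measurable_ofReal.comp
          (((measurable_const.sub hu).abs).pow_const p)
    _ < ⊤ := by
        apply ENNReal.mul_lt_top ENNReal.ofReal_lt_top
        apply ENNReal.add_lt_top.2 ⟨hFx, ?_⟩
        rw [setLIntegral_const]
        exact ENNReal.mul_lt_top ENNReal.ofReal_lt_top measure_ball_lt_top

/-- Local `L^p`-integrability: if `G ⊆ ℝⁿ` is open, `0 < p < ∞`,
`0 < τ, δ < 1`, `K ⊆ G` is compact and `u` is a measurable function on `G` with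
`|u|_{W^{δ,p}_τ(G)} < ∞`, then `u ∈ L^p(K)`. -/
theorem statement6 (n : ℕ) (G : Set (Eucl n)) (hG : IsOpen G)
    (p τ δ : ℝ) (hp : 0 < p) (hτ : τ ∈ Ioo (0:ℝ) 1) (hδ : δ ∈ Ioo (0:ℝ) 1)
    (K : Set (Eucl n)) (hK : IsCompact K) (hKG : K ⊆ G)
    (u : Eucl n → ℝ) (hu : Measurable u) (hfin : fracEnergyTau n δ τ p G u < ⊤) :
    (∫⁻ y in K, ENNReal.ofReal (|u y| ^ p) ∂volume) < ⊤ := by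
  -- for each point of K there is a good ball
  have key : ∀ z ∈ K, ∃ ρ : ℝ, 0 < ρ ∧ ball z ρ ⊆ G ∧
      ∀ x ∈ ball z ρ, ball z ρ ⊆ tauBall n τ G x := by
    intro z hz
    obtain ⟨ε, hε, hεG⟩ := Metric.isOpen_iff.1 hG z (hKG hz)
    rcases eq_empty_or_nonempty (frontier G) with hfr | hfr
    · refine ⟨ε / 2, by linarith, fun w hw => hεG (ball_subset_ball (by linarith) hw), ?_⟩
      intro x _ y _
      have : EMetric.infEdist x (frontier G) = ⊤ := by
        rw [hfr]; exact EMetric.infEdist_empty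
      rw [tauBall, mem_setOf_eq, this, ENNReal.mul_top]
      · exact edist_lt_top x y
      · simp [ENNReal.ofReal_eq_zero, not_le, hτ.1]
    · set d := infDist z (frontier G) with hd
      have hzfr : z ∉ frontier G := by
        rw [hG.frontier_eq]
        exact fun h => h.2 (hKG hz)
      have hd0 : 0 < d :=
        (isClosed_frontier.notMem_iff_infDist_pos hfr).1 hzfr
      set ρ := min (ε / 2) (τ * d / 4) with hρdef
      have hρ0 : 0 < ρ := lt_min (by linarith) (by have := mul_pos hτ.1 hd0; linarith)
      have hρ1 : ρ ≤ ε / 2 := min_le_left _ _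
      have hρ2 : ρ ≤ τ * d / 4 := min_le_right _ _
      have hρd : ρ ≤ d / 4 := by nlinarith [hτ.2, hτ.1]
      refine ⟨ρ, hρ0, fun w hw => hεG (ball_subset_ball (by linarith) hw), ?_⟩
      intro x hx y hy
      rw [tauBall, mem_setOf_eq]
      have hxz : dist x z < ρ := mem_ball.1 hx
      have hyz : dist y z < ρ := mem_ball.1 hy
      have hinf : d - dist x z ≤ infDist x (frontier G) := by
        have := infDist_le_infDist_add_dist (x := z) (y := x) (s := frontier G)
        rw [dist_comm] at this
        linarith
      have hxy : dist x y < 2 * ρ := by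
        calc dist x y ≤ dist x z + dist z y := dist_triangle _ _ _
          _ < 2 * ρ := by rw [dist_comm z y]; linarith
      have hreal : dist x y < τ * infDist x (frontier G) := by
        have h1 : 3 * d / 4 ≤ infDist x (frontier G) := by linarith
        have h2 : (2:ℝ) * ρ ≤ τ * d / 2 := by linarith
        nlinarith [hτ.1]
      have hne : EMetric.infEdist x (frontier G) ≠ ⊤ := Metric.infEdist_ne_top hfr
      have : ENNReal.ofReal τ * EMetric.infEdist x (frontier G)
          = ENNReal.ofReal (τ * infDist x (frontier G)) := by
        rw [ENNReal.ofReal_mul hτ.1.le, infDist, ENNReal.ofReal_toReal (Metric.infEDist_ne_top hfr)]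
        rfl
      rw [this, edist_dist]
      exact (ENNReal.ofReal_lt_ofReal_iff_of_nonneg dist_nonneg).2 hreal
  choose! ρ hρ0 hρG hρτ using key
  -- finite subcover
  obtain ⟨t, ht⟩ := hK.elim_finite_subcover (fun z : K => ball (z : Eucl n) (ρ z))
    (fun z => isOpen_ball) (fun z hz => mem_iUnion.2 ⟨⟨z, hz⟩, mem_ball_self (hρ0 z hz)⟩)
  calc (∫⁻ y in K, ENNReal.ofReal (|u y| ^ p) ∂volume)
      ≤ ∫⁻ y in ⋃ z ∈ t, ball (z : Eucl n) (ρ z), ENNReal.ofReal (|u y| ^ p) ∂volume :=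
        lintegral_mono_set ht
    _ ≤ ∫⁻ y in ⋃ z : t, ball ((z : K) : Eucl n) (ρ z), ENNReal.ofReal (|u y| ^ p) ∂volume := by
        apply lintegral_mono_set
        exact iUnion₂_subset fun i hi => subset_iUnion_of_subset (⟨i, hi⟩ : t) subset_rfl
    _ ≤ ∑' z : t, ∫⁻ y in ball ((z : K) : Eucl n) (ρ z), ENNReal.ofReal (|u y| ^ p) ∂volume :=
        lintegral_iUnion_le _ _
    _ < ⊤ := by
        rw [tsum_fintype]
        refine ENNReal.sum_lt_top.2 fun z _ => ?_
        exact local_ball_bound n G p τ δ hp hδ.1 u hu hfin _ _ (hρ0 z z.1.2)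
          (hρG z z.1.2) (hρτ z z.1.2)
end

section
/- Suppose G is an open set in ℝⁿ. Let 0 < τ, δ < 1 and 1 ≤ p < ∞ be given. Then there is a constant κ = κ(n, τ) ≥ 1 such that the inequality |u|_{A^{δ,p}_κ(G)} ≤ (√n)^{n/p + δ} |u|_{W^{δ,p}_τ(G)} holds for every u ∈ L¹(G). -/
open MeasureTheory Metric Set
open scoped ENNReal NNReal BigOperators

namespace S7

lemma coord_le_dist {n : ℕ} (x y : Eucl n) (i : Fin n) : |x i - y i| ≤ dist x y := by
  rw [EuclideanSpace.dist_eq, ← Real.sqrt_sq_eq_abs]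
  apply Real.sqrt_le_sqrt
  calc (x i - y i) ^ 2 = dist (x i) (y i) ^ 2 := by rw [Real.dist_eq, sq_abs]
    _ ≤ ∑ j, dist (x j) (y j) ^ 2 :=
      Finset.single_le_sum (f := fun j => dist (x j) (y j) ^ 2)
        (fun j _ => sq_nonneg _) (Finset.mem_univ i)

lemma dist_le_of_mem_cube {n : ℕ} {z : Eucl n} {r : ℝ} (hr : 0 ≤ r) {x y : Eucl n}
    (hx : x ∈ cube n z r) (hy : y ∈ cube n z r) : dist x y ≤ 2 * r * Real.sqrt n := by
  rw [EuclideanSpace.dist_eq]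
  have h1 : ∑ i, dist (x i) (y i) ^ 2 ≤ (n : ℝ) * (2 * r) ^ 2 := by
    calc ∑ i, dist (x i) (y i) ^ 2 ≤ ∑ _i : Fin n, (2 * r) ^ 2 := by
          apply Finset.sum_le_sum
          intro i _
          have h2 : dist (x i) (y i) ≤ 2 * r := by
            rw [Real.dist_eq]
            calc |x i - y i| = |(x i - z i) - (y i - z i)| := by ring_nf
              _ ≤ |x i - z i| + |y i - z i| := abs_sub _ _
              _ ≤ r + r := add_le_add (hx i) (hy i)
              _ = 2 * r := by ring
          exact pow_le_pow_left₀ dist_nonneg h2 2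
      _ = (n : ℝ) * (2 * r) ^ 2 := by simp [mul_comm]
  calc Real.sqrt (∑ i, dist (x i) (y i) ^ 2) ≤ Real.sqrt ((n : ℝ) * (2 * r) ^ 2) :=
        Real.sqrt_le_sqrt h1
    _ = 2 * r * Real.sqrt n := by
        rw [Real.sqrt_mul (Nat.cast_nonneg n), Real.sqrt_sq (by linarith)]; ring

lemma isClosed_cube {n : ℕ} (z : Eucl n) (r : ℝ) : IsClosed (cube n z r) := by
  have : cube n z r = ⋂ i, {x : Eucl n | |x i - z i| ≤ r} := by
    ext x; simp [cube]
  rw [this]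
  refine isClosed_iInter fun i => ?_
  have hc : Continuous fun x : Eucl n => |x i - z i| :=
    (((EuclideanSpace.proj i : Eucl n →L[ℝ] ℝ).continuous).sub continuous_const).abs
  exact isClosed_le hc continuous_const

lemma measurableSet_cube {n : ℕ} (z : Eucl n) (r : ℝ) : MeasurableSet (cube n z r) :=
  (isClosed_cube z r).measurableSet

lemma volume_cube {n : ℕ} (z : Eucl n) {r : ℝ} (hr : 0 ≤ r) :
    volume (cube n z r) = ENNReal.ofReal ((2 * r) ^ n) := by
  have hpre : cube n z r =
      (@WithLp.ofLp 2 (Fin n → ℝ)) ⁻¹'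
        (Set.univ.pi fun i => Icc (z i - r) (z i + r)) := by
    ext x
    simp only [cube, Set.mem_preimage, Set.mem_pi, Set.mem_univ, forall_true_left,
      Set.mem_Icc, Set.mem_setOf_eq]
    refine forall_congr' fun i => ?_
    rw [abs_sub_le_iff]
    constructor
    · rintro ⟨h1, h2⟩; exact ⟨by linarith, by linarith⟩
    · rintro ⟨h1, h2⟩; exact ⟨by linarith, by linarith⟩
  rw [hpre, (PiLp.volume_preserving_ofLp (ι := Fin n)).measure_preimage
    ((MeasurableSet.univ_pi fun i => measurableSet_Icc).nullMeasurableSet)]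
  rw [volume_pi_pi]
  have : ∀ i : Fin n, volume (Icc (z i - r) (z i + r)) = ENNReal.ofReal (2 * r) := by
    intro i; rw [Real.volume_Icc]; ring_nf
  simp only [this, Finset.prod_const, Finset.card_univ, Fintype.card_fin]
  rw [← ENNReal.ofReal_pow (by linarith)]

lemma lintegral_le_rpow_mul {α : Type*} [MeasurableSpace α] (μ : Measure α) {p : ℝ} (hp : 1 ≤ p)
    {f : α → ℝ≥0∞} (hf : AEMeasurable f μ) :
    ∫⁻ a, f a ∂μ ≤ (∫⁻ a, f a ^ p ∂μ) ^ (1 / p) * μ Set.univ ^ (1 - 1 / p) := by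
  rcases eq_or_lt_of_le hp with h1 | h1
  · rw [← h1]
    norm_num [ENNReal.rpow_one]
  · have hpq : p.HolderConjugate (Real.conjExponent p) := Real.HolderConjugate.conjExponent h1
    have h := ENNReal.lintegral_mul_le_Lp_mul_Lq μ hpq hf
      (aemeasurable_const (b := (1 : ℝ≥0∞)))
    simp only [Pi.mul_apply, mul_one, ENNReal.one_rpow, lintegral_const, one_mul] at h
    have hq : 1 / Real.conjExponent p = 1 - 1 / p := by
      have hpne : p ≠ 0 := by linarith
      have hp1ne : p - 1 ≠ 0 := sub_ne_zero.2 (ne_of_gt h1)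
      rw [Real.conjExponent]
      field_simp
    rwa [hq] at h

lemma const_calc {n : ℕ} {δ p r : ℝ} (hp : 1 ≤ p) (hr : 0 < r) :
    ((((2*r)^n : ℝ) ^ (-(1:ℝ) - δ / n) * ((2*r)^n : ℝ)⁻¹) ^ p *
        (((2*r)^n : ℝ) ^ (p-1) * ((2*r)^n : ℝ) ^ (p-1) * ((2*r)^n : ℝ)))
      * (2*r*Real.sqrt n) ^ ((n:ℝ) + δ*p) = Real.sqrt n ^ ((n:ℝ) + δ*p) := by
  have hp0 : (0:ℝ) < p := by linarith
  have hs : (0:ℝ) < 2*r := by linarith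
  rcases Nat.eq_zero_or_pos n with hn | hn
  · subst hn
    simp only [pow_zero, Nat.cast_zero, CharP.cast_eq_zero, Real.sqrt_zero, mul_zero,
      Real.one_rpow, inv_one, mul_one, one_mul, zero_add]
  · have hNpos : (0:ℝ) < (n:ℝ) := by exact_mod_cast hn
    have hNne : ((n:ℝ)) ≠ 0 := hNpos.ne'
    have hsn : ((2*r)^n : ℝ) = (2*r) ^ ((n:ℝ)) := (Real.rpow_natCast _ n).symm
    have fact1 : ((2*r) ^ ((n:ℝ))) ^ (-(1:ℝ) - δ/(n:ℝ)) = (2*r) ^ ((n:ℝ) * (-(1:ℝ) - δ/(n:ℝ))) :=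
      (Real.rpow_mul hs.le _ _).symm
    have fact2 : ((2*r) ^ ((n:ℝ)))⁻¹ = (2*r) ^ (-(n:ℝ)) := by
      rw [← Real.rpow_neg_one ((2*r) ^ ((n:ℝ))), ← Real.rpow_mul hs.le]
      norm_num
    have fact3 : ((2*r) ^ ((n:ℝ))) ^ (p - 1) = (2*r) ^ ((n:ℝ) * (p-1)) :=
      (Real.rpow_mul hs.le _ _).symm
    have fact5 : (2*r*Real.sqrt n) ^ ((n:ℝ) + δ*p)
        = (2*r) ^ ((n:ℝ) + δ*p) * Real.sqrt n ^ ((n:ℝ) + δ*p) :=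
      Real.mul_rpow hs.le (Real.sqrt_nonneg _)
    rw [hsn, fact1, fact2, fact3, fact5]
    simp only [← Real.rpow_add hs, ← Real.rpow_mul hs.le, ← mul_assoc]
    convert one_mul (Real.sqrt (n:ℝ) ^ ((n:ℝ) + δ*p)) using 2
    rw [← Real.rpow_zero (2*r)]
    congr 1
    field_simp
    simp only [Real.rpow_zero, pow_zero]
    ring

lemma cube_estimate {n : ℕ} {δ p r : ℝ} {z : Eucl n} {u : Eucl n → ℝ}
    (hδ : 0 < δ) (hp : 1 ≤ p) (hr : 0 < r)
    (hu : IntegrableOn u (cube n z r) volume) :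
    ENNReal.ofReal (aTerm n δ u z r) ^ p * volume (cube n z r) ≤
      ENNReal.ofReal (Real.sqrt n ^ ((n:ℝ) + δ * p)) *
        ∫⁻ x in cube n z r, ∫⁻ y in cube n z r, fracKernel n δ p u x y ∂volume ∂volume := by
  classical
  have hp0 : (0:ℝ) < p := lt_of_lt_of_le one_pos hp
  set Q := cube n z r with hQdef
  have hQm : MeasurableSet Q := measurableSet_cube z r
  have hm : (0:ℝ) < (2*r)^n := pow_pos (by linarith) n
  set m : ℝ := (2*r)^n with hmdef
  have hvol : volume Q = ENNReal.ofReal m := volume_cube z hr.le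
  have hvol_ne_top : volume Q ≠ ∞ := by rw [hvol]; exact ENNReal.ofReal_ne_top
  have hvol_lt_top : volume Q < ∞ := lt_top_iff_ne_top.2 hvol_ne_top
  have hmtoReal : (volume Q).toReal = m := by rw [hvol, ENNReal.toReal_ofReal hm.le]
  set uQ : ℝ := ⨍ y in Q, u y ∂volume with huQdef
  have huQ : IntegrableOn (fun _ : Eucl n => uQ) Q volume :=
    integrableOn_const hvol_ne_top
  have hsub : IntegrableOn (fun x => |u x - uQ|) Q volume := (hu.sub huQ).abs
  -- pointwise bound |u x - u_Q| ≤ m⁻¹ ∫_Q |u x - u y|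
  have hptwise : ∀ x : Eucl n, |u x - uQ| ≤ m⁻¹ * ∫ y in Q, |u x - u y| ∂volume := by
    intro x
    have hconst : IntegrableOn (fun _ : Eucl n => u x) Q volume :=
      integrableOn_const hvol_ne_top
    have h1 : ∫ y in Q, (u x - u y) ∂volume = m * u x - ∫ y in Q, u y ∂volume := by
      rw [integral_sub hconst hu, setIntegral_const, measureReal_def, hmtoReal, smul_eq_mul]
    have h2 : u x - uQ = m⁻¹ * ∫ y in Q, (u x - u y) ∂volume := by
      rw [h1, huQdef, setAverage_eq, measureReal_def, hmtoReal, smul_eq_mul]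
      field_simp
    rw [h2, abs_mul, abs_of_nonneg (inv_nonneg.2 hm.le)]
    refine mul_le_mul_of_nonneg_left ?_ (inv_nonneg.2 hm.le)
    calc |∫ y in Q, (u x - u y) ∂volume| = ‖∫ y in Q, (u x - u y) ∂volume‖ :=
          (Real.norm_eq_abs _).symm
      _ ≤ ∫ y in Q, ‖u x - u y‖ ∂volume := norm_integral_le_integral_norm _
      _ = ∫ y in Q, |u x - u y| ∂volume := by simp [Real.norm_eq_abs]
  have hsubInner : ∀ x : Eucl n, IntegrableOn (fun y => |u x - u y|) Q volume := fun x =>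
    ((integrableOn_const hvol_ne_top : IntegrableOn (fun _ => u x) Q volume).sub hu).abs
  have hofInner : ∀ x : Eucl n, ENNReal.ofReal (∫ y in Q, |u x - u y| ∂volume)
      = ∫⁻ y in Q, ENNReal.ofReal |u x - u y| ∂volume := fun x =>
    ofReal_integral_eq_lintegral_ofReal (hsubInner x)
      (Filter.Eventually.of_forall fun y => abs_nonneg _)
  set g : Eucl n → ℝ≥0∞ := fun x => ∫⁻ y in Q, ENNReal.ofReal |u x - u y| ∂volume with hgdef
  set I := ∫⁻ x in Q, g x ∂volume with hIdef
  have hstep1 : ∫⁻ x in Q, ENNReal.ofReal |u x - uQ| ∂volume ≤ ENNReal.ofReal m⁻¹ * I := by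
    rw [hIdef, ← lintegral_const_mul' _ _ ENNReal.ofReal_ne_top]
    refine lintegral_mono fun x => ?_
    calc ENNReal.ofReal |u x - uQ|
        ≤ ENNReal.ofReal (m⁻¹ * ∫ y in Q, |u x - u y| ∂volume) :=
          ENNReal.ofReal_le_ofReal (hptwise x)
      _ = ENNReal.ofReal m⁻¹ * g x := by
          rw [ENNReal.ofReal_mul (inv_nonneg.2 hm.le), hofInner x]
  -- ofReal aTerm bound
  have haT : ENNReal.ofReal (aTerm n δ u z r)
      ≤ ENNReal.ofReal (m ^ (-(1:ℝ) - δ / n) * m⁻¹) * I := by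
    rw [aTerm, hmtoReal]
    rw [ENNReal.ofReal_mul (Real.rpow_nonneg hm.le _)]
    rw [ofReal_integral_eq_lintegral_ofReal hsub
      (Filter.Eventually.of_forall fun x => abs_nonneg _)]
    calc ENNReal.ofReal (m ^ (-(1:ℝ) - δ / n)) * ∫⁻ x in Q, ENNReal.ofReal |u x - uQ| ∂volume
        ≤ ENNReal.ofReal (m ^ (-(1:ℝ) - δ / n)) * (ENNReal.ofReal m⁻¹ * I) :=
          mul_le_mul_right hstep1 _
      _ = ENNReal.ofReal (m ^ (-(1:ℝ) - δ / n) * m⁻¹) * I := by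
          rw [ENNReal.ofReal_mul (Real.rpow_nonneg hm.le _), mul_assoc]
  -- measurability
  have hum : AEMeasurable u (volume.restrict Q) := hu.aestronglyMeasurable.aemeasurable
  obtain ⟨w, hw_meas, hw_eq⟩ := hum
  have hum' : AEMeasurable u (volume.restrict Q) := ⟨w, hw_meas, hw_eq⟩
  set h : Eucl n → ℝ≥0∞ := fun x => ∫⁻ y in Q, ENNReal.ofReal |u x - u y| ^ p ∂volume with hhdef
  set J := ∫⁻ x in Q, h x ∂volume with hJdef
  have hH : Measurable fun t : ℝ => ∫⁻ y in Q, ENNReal.ofReal |t - w y| ^ p ∂volume := by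
    apply Measurable.lintegral_prod_right
      (f := fun t : ℝ => fun y : Eucl n => ENNReal.ofReal |t - w y| ^ p)
    exact ((measurable_fst.sub (hw_meas.comp measurable_snd)).abs.ennreal_ofReal).pow_const p
  have hhm : AEMeasurable h (volume.restrict Q) := by
    have heq : h = (fun t => ∫⁻ y in Q, ENNReal.ofReal |t - w y| ^ p ∂volume) ∘ u := by
      funext x
      exact lintegral_congr_ae (hw_eq.mono fun y hy => by simp only [hy])
    rw [heq]
    exact hH.comp_aemeasurable hum'
  -- inner Hölder
  have hinner : ∀ x : Eucl n, g x ≤ h x ^ (1/p) * volume Q ^ (1 - 1/p) := by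
    intro x
    have hmeas : AEMeasurable (fun y => ENNReal.ofReal |u x - u y|) (volume.restrict Q) :=
      (measurable_abs.comp_aemeasurable (aemeasurable_const.sub hum')).ennreal_ofReal
    have := lintegral_le_rpow_mul (volume.restrict Q) hp hmeas
    simpa [Measure.restrict_apply_univ] using this
  -- outer Hölder
  have hexp_nonneg : (0:ℝ) ≤ 1 - 1/p := by
    rw [sub_nonneg]
    exact (div_le_one hp0).2 hp
  have hpow_ne_top : volume Q ^ (1 - 1/p) ≠ ∞ :=
    ENNReal.rpow_ne_top_of_nonneg hexp_nonneg hvol_ne_top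
  have hIJ : I ≤ J ^ (1/p) * volume Q ^ (1 - 1/p) * volume Q ^ (1 - 1/p) := by
    have houter := lintegral_le_rpow_mul (volume.restrict Q) hp
      (f := fun x => h x ^ (1/p)) (hhm.pow_const _)
    rw [Measure.restrict_apply_univ] at houter
    have hsimp : ∀ x : Eucl n, (h x ^ (1/p)) ^ p = h x := by
      intro x
      rw [← ENNReal.rpow_mul, one_div, inv_mul_cancel₀ hp0.ne', ENNReal.rpow_one]
    simp_rw [hsimp] at houter
    calc I ≤ ∫⁻ x in Q, h x ^ (1/p) * volume Q ^ (1 - 1/p) ∂volume :=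
          lintegral_mono fun x => hinner x
      _ = (∫⁻ x in Q, h x ^ (1/p) ∂volume) * volume Q ^ (1 - 1/p) :=
          lintegral_mul_const' _ _ hpow_ne_top
      _ ≤ J ^ (1/p) * volume Q ^ (1 - 1/p) * volume Q ^ (1 - 1/p) :=
          mul_le_mul_left houter _
  -- kernel bound
  set E : ℝ := (n:ℝ) + δ * p with hEdef
  have hE_nonneg : (0:ℝ) ≤ E := by positivity
  have hkernel : ∀ x ∈ Q, ∀ y ∈ Q, ENNReal.ofReal |u x - u y| ^ p
      ≤ ENNReal.ofReal ((2*r*Real.sqrt n) ^ E) * fracKernel n δ p u x y := by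
    intro x hx y hy
    rw [ENNReal.ofReal_rpow_of_nonneg (abs_nonneg _) hp0.le, fracKernel,
        ← ENNReal.ofReal_mul (by positivity)]
    apply ENNReal.ofReal_le_ofReal
    rcases eq_or_lt_of_le (dist_nonneg (x := x) (y := y)) with hd | hd
    · have hxy : x = y := dist_eq_zero.mp hd.symm
      rw [hxy, sub_self, abs_zero, Real.zero_rpow hp0.ne']
      positivity
    · have h1 : dist x y ^ E ≤ (2*r*Real.sqrt n) ^ E :=
        Real.rpow_le_rpow hd.le (dist_le_of_mem_cube hr.le hx hy) hE_nonneg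
      have h2 : (0:ℝ) < dist x y ^ E := Real.rpow_pos_of_pos hd _
      calc |u x - u y| ^ p
          = |u x - u y| ^ p / dist x y ^ E * dist x y ^ E := by field_simp
        _ ≤ |u x - u y| ^ p / dist x y ^ E * (2*r*Real.sqrt n) ^ E :=
            mul_le_mul_of_nonneg_left h1 (by positivity)
        _ = (2*r*Real.sqrt n) ^ E * (|u x - u y| ^ p / dist x y ^ E) := mul_comm _ _
  set K := ∫⁻ x in Q, ∫⁻ y in Q, fracKernel n δ p u x y ∂volume ∂volume with hKdef
  have hJK : J ≤ ENNReal.ofReal ((2*r*Real.sqrt n) ^ E) * K := by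
    rw [hJdef, hKdef, ← lintegral_const_mul' _ _ ENNReal.ofReal_ne_top]
    refine lintegral_mono_ae ?_
    filter_upwards [ae_restrict_mem hQm] with x hx
    rw [← lintegral_const_mul' _ _ ENNReal.ofReal_ne_top]
    refine lintegral_mono_ae ?_
    filter_upwards [ae_restrict_mem hQm] with y hy
    exact hkernel x hx y hy
  -- assemble
  have hb_nonneg : (0:ℝ) ≤ m ^ (-(1:ℝ) - δ / n) * m⁻¹ := by positivity
  have expand : ∀ A B C : ℝ≥0∞, (A * (B * C * C)) ^ p = A ^ p * ((B ^ p) * (C ^ p * C ^ p)) := by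
    intro A B C
    rw [ENNReal.mul_rpow_of_nonneg _ _ hp0.le, ENNReal.mul_rpow_of_nonneg _ _ hp0.le,
        ENNReal.mul_rpow_of_nonneg _ _ hp0.le]
    ring
  have hJp : (J ^ (1/p)) ^ p = J := by
    rw [← ENNReal.rpow_mul, one_div, inv_mul_cancel₀ hp0.ne', ENNReal.rpow_one]
  have hVp : (volume Q ^ (1 - 1/p)) ^ p = ENNReal.ofReal (m ^ (p-1)) := by
    rw [← ENNReal.rpow_mul]
    have he : (1 - 1/p) * p = p - 1 := by field_simp
    rw [he, hvol, ENNReal.ofReal_rpow_of_nonneg hm.le (by linarith : (0:ℝ) ≤ p - 1)]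
  have step2 : ENNReal.ofReal (aTerm n δ u z r) ^ p
      ≤ ENNReal.ofReal ((m ^ (-(1:ℝ) - δ / n) * m⁻¹) ^ p) *
          (J * (ENNReal.ofReal (m ^ (p-1)) * ENNReal.ofReal (m ^ (p-1)))) := by
    calc ENNReal.ofReal (aTerm n δ u z r) ^ p
        ≤ (ENNReal.ofReal (m ^ (-(1:ℝ) - δ / n) * m⁻¹) *
            (J ^ (1/p) * volume Q ^ (1 - 1/p) * volume Q ^ (1 - 1/p))) ^ p :=
          ENNReal.rpow_le_rpow (le_trans haT (mul_le_mul_right hIJ _)) hp0.le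
      _ = ENNReal.ofReal ((m ^ (-(1:ℝ) - δ / n) * m⁻¹) ^ p) *
            (J * (ENNReal.ofReal (m ^ (p-1)) * ENNReal.ofReal (m ^ (p-1)))) := by
          rw [expand, hJp, hVp, ENNReal.ofReal_rpow_of_nonneg hb_nonneg hp0.le]
  calc ENNReal.ofReal (aTerm n δ u z r) ^ p * volume Q
      ≤ ENNReal.ofReal ((m ^ (-(1:ℝ) - δ / n) * m⁻¹) ^ p) *
          (J * (ENNReal.ofReal (m ^ (p-1)) * ENNReal.ofReal (m ^ (p-1)))) * volume Q :=
        mul_le_mul_left step2 _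
    _ = (ENNReal.ofReal ((m ^ (-(1:ℝ) - δ / n) * m⁻¹) ^ p) *
          (ENNReal.ofReal (m ^ (p-1)) * ENNReal.ofReal (m ^ (p-1)) * ENNReal.ofReal m)) * J := by
        rw [hvol]; ring
    _ ≤ (ENNReal.ofReal ((m ^ (-(1:ℝ) - δ / n) * m⁻¹) ^ p) *
          (ENNReal.ofReal (m ^ (p-1)) * ENNReal.ofReal (m ^ (p-1)) * ENNReal.ofReal m)) *
            (ENNReal.ofReal ((2*r*Real.sqrt n) ^ E) * K) :=
        mul_le_mul_right hJK _
    _ = ENNReal.ofReal (Real.sqrt n ^ E) * K := by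
        have hassoc : ∀ X c k : ℝ≥0∞, X * (c * k) = (X * c) * k := fun X c k => by ring
        rw [hassoc]
        have merge : ENNReal.ofReal ((m ^ (-(1:ℝ) - δ / n) * m⁻¹) ^ p) *
            (ENNReal.ofReal (m ^ (p-1)) * ENNReal.ofReal (m ^ (p-1)) * ENNReal.ofReal m) *
            ENNReal.ofReal ((2*r*Real.sqrt n) ^ E) = ENNReal.ofReal (Real.sqrt n ^ E) := by
          rw [← ENNReal.ofReal_mul (by positivity), ← ENNReal.ofReal_mul (by positivity),
              ← ENNReal.ofReal_mul (by positivity), ← ENNReal.ofReal_mul (by positivity)]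
          congr 1
          rw [hEdef, hmdef]
          rw [← const_calc (n := n) (δ := δ) hp hr]
        rw [merge]

lemma mem_tauBall_of_cube {n : ℕ} {τ r : ℝ} (hτ : τ ∈ Ioo (0:ℝ) 1) (hr : 0 < r)
    {G : Set (Eucl n)} (hG : IsOpen G) {z : Eucl n}
    (hκQ : cube n z ((1 + 3*(Real.sqrt n + 1)/τ) * r) ⊆ G)
    {x y : Eucl n} (hx : x ∈ cube n z r) (hy : y ∈ cube n z r) :
    y ∈ tauBall n τ G x := by
  have hτ0 : (0:ℝ) < τ := hτ.1
  set κ : ℝ := 1 + 3*(Real.sqrt n + 1)/τ with hκdef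
  have hκ1 : (0:ℝ) ≤ κ - 1 := by
    have : (0:ℝ) ≤ 3*(Real.sqrt n + 1)/τ := by positivity
    simp only [hκdef]; linarith
  have hcoeff : τ * ((κ - 1) * r) = 3*(Real.sqrt n + 1) * r := by
    simp only [hκdef, add_sub_cancel_left]
    field_simp
  have hfar : ∀ w ∈ frontier G, (κ - 1) * r ≤ dist x w := by
    intro w hw
    by_contra hlt
    push_neg at hlt
    have hwG : w ∈ cube n z (κ * r) := by
      intro i
      refine le_of_lt ?_
      have hcoord : |w i - x i| ≤ dist x w := by
        rw [dist_comm]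
        exact coord_le_dist w x i
      calc |w i - z i| ≤ |w i - x i| + |x i - z i| := abs_sub_le _ _ _
        _ ≤ dist x w + r := add_le_add hcoord (hx i)
        _ < (κ - 1) * r + r := by linarith
        _ = κ * r := by ring
    have hwnotG : w ∉ G := by
      rw [hG.frontier_eq] at hw
      exact hw.2
    exact hwnotG (hκQ hwG)
  have hinf : ENNReal.ofReal ((κ - 1) * r) ≤ EMetric.infEdist x (frontier G) := by
    rw [show EMetric.infEdist x (frontier G) = Metric.infEDist x (frontier G) from rfl,
      Metric.le_infEDist]
    intro w hw
    rw [edist_dist]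
    exact ENNReal.ofReal_le_ofReal (hfar w hw)
  show edist x y < ENNReal.ofReal τ * EMetric.infEdist x (frontier G)
  calc edist x y = ENNReal.ofReal (dist x y) := edist_dist x y
    _ ≤ ENNReal.ofReal (2 * r * Real.sqrt n) :=
        ENNReal.ofReal_le_ofReal (dist_le_of_mem_cube hr.le hx hy)
    _ < ENNReal.ofReal (3 * (Real.sqrt n + 1) * r) := by
        rw [ENNReal.ofReal_lt_ofReal_iff (by positivity)]
        nlinarith [Real.sqrt_nonneg (n:ℝ)]
    _ = ENNReal.ofReal τ * ENNReal.ofReal ((κ - 1) * r) := by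
        rw [← ENNReal.ofReal_mul hτ0.le, hcoeff]
    _ ≤ ENNReal.ofReal τ * EMetric.infEdist x (frontier G) := mul_le_mul_right hinf _

end S7

/-- There is `κ = κ(n,τ) ≥ 1` such that, for every open `G ⊆ ℝⁿ`,
`0 < τ, δ < 1`, `1 ≤ p < ∞` and every `u ∈ L¹(G)`,
`|u|_{A^{δ,p}_κ(G)} ≤ (√n)^{n/p + δ} |u|_{W^{δ,p}_τ(G)}`. -/
theorem statement7 (n : ℕ) (τ : ℝ) (hτ : τ ∈ Ioo (0:ℝ) 1) :
    ∃ κ : ℝ, 1 ≤ κ ∧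
      ∀ δ p : ℝ, δ ∈ Ioo (0:ℝ) 1 → 1 ≤ p →
        ∀ G : Set (Eucl n), IsOpen G →
          ∀ u : Eucl n → ℝ, IntegrableOn u G volume →
            ASeminorm n κ δ p G u
              ≤ ENNReal.ofReal (Real.sqrt n ^ ((n:ℝ) / p + δ)) *
                  fracEnergyTau n δ τ p G u ^ (1 / p) := by
  classical
  have hτ0 : (0:ℝ) < τ := hτ.1
  have hκnn : (0:ℝ) ≤ 3*(Real.sqrt n + 1)/τ := by positivity
  refine ⟨1 + 3*(Real.sqrt n + 1)/τ, by linarith, ?_⟩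
  intro δ p hδ hp G hG u hu
  have hp0 : (0:ℝ) < p := lt_of_lt_of_le one_pos hp
  rw [ASeminorm]
  refine iSup_le fun 𝒬 => iSup_le fun h1 => iSup_le fun h2 => ?_
  -- cubes of the family are inside `G`
  have hQsubG : ∀ c : ↥𝒬, cube n (c : Eucl n × ℝ).1 (c : Eucl n × ℝ).2 ⊆ G := by
    intro c
    have hr0 : 0 < (c : Eucl n × ℝ).2 := (h1 _ c.property).1
    have h2' : (c : Eucl n × ℝ).2 ≤ (1 + 3*(Real.sqrt n + 1)/τ) * (c : Eucl n × ℝ).2 := by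
      nlinarith
    intro x hx
    refine (h1 _ c.property).2 (fun i => le_trans (hx i) h2')
  -- countability of the family
  have hcube_disj : Pairwise (Function.onFun Disjoint
      fun c : ↥𝒬 => cube n (c : Eucl n × ℝ).1 (c : Eucl n × ℝ).2) := by
    intro c c' hne
    have hvne : (c : Eucl n × ℝ) ≠ (c' : Eucl n × ℝ) := Subtype.coe_injective.ne hne
    rw [Function.onFun, Set.disjoint_iff_inter_eq_empty]
    exact h2 _ c.property _ c'.property hvne
  haveI hcount : Countable ↥𝒬 := by
    have hc := MeasureTheory.Measure.countable_meas_pos_of_disjoint_iUnion (μ := volume)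
      (As := fun c : ↥𝒬 => cube n (c : Eucl n × ℝ).1 (c : Eucl n × ℝ).2)
      (fun c => S7.measurableSet_cube _ _) hcube_disj
    have huniv : {c : ↥𝒬 |
        0 < volume (cube n (c : Eucl n × ℝ).1 (c : Eucl n × ℝ).2)} = Set.univ := by
      ext c
      simp only [Set.mem_setOf_eq, Set.mem_univ, iff_true]
      rw [S7.volume_cube _ (le_of_lt (h1 _ c.property).1)]
      exact ENNReal.ofReal_pos.2 (pow_pos (by linarith [(h1 _ c.property).1]) n)
    rw [huniv] at hc
    exact Set.countable_univ_iff.1 hc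
  -- main estimate for the p-th powers
  have hmain : (∫⁻ x in G,
        (∑' c : ↥𝒬, (cube n (c : Eucl n × ℝ).1 (c : Eucl n × ℝ).2).indicator
          (fun _ => ENNReal.ofReal (aTerm n δ u (c : Eucl n × ℝ).1 (c : Eucl n × ℝ).2)) x) ^ p
        ∂volume)
      ≤ ENNReal.ofReal (Real.sqrt n ^ ((n:ℝ) + δ * p)) * fracEnergyTau n δ τ p G u := by
    have hpt : ∀ x : Eucl n,
        (∑' c : ↥𝒬, (cube n (c : Eucl n × ℝ).1 (c : Eucl n × ℝ).2).indicator
          (fun _ => ENNReal.ofReal (aTerm n δ u (c : Eucl n × ℝ).1 (c : Eucl n × ℝ).2)) x) ^ p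
        ≤ ∑' c : ↥𝒬, (cube n (c : Eucl n × ℝ).1 (c : Eucl n × ℝ).2).indicator
          (fun _ => ENNReal.ofReal (aTerm n δ u (c : Eucl n × ℝ).1 (c : Eucl n × ℝ).2) ^ p) x := by
      intro x
      by_cases hex : ∃ c : ↥𝒬, x ∈ cube n (c : Eucl n × ℝ).1 (c : Eucl n × ℝ).2
      · obtain ⟨c₀, hc₀⟩ := hex
        have heq : (∑' c : ↥𝒬, (cube n (c : Eucl n × ℝ).1 (c : Eucl n × ℝ).2).indicator
            (fun _ => ENNReal.ofReal (aTerm n δ u (c : Eucl n × ℝ).1 (c : Eucl n × ℝ).2)) x)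
            = ENNReal.ofReal (aTerm n δ u (c₀ : Eucl n × ℝ).1 (c₀ : Eucl n × ℝ).2) := by
          rw [tsum_eq_single c₀ ?_]
          · exact Set.indicator_of_mem hc₀ _
          · intro c hc
            refine Set.indicator_of_notMem (fun hxc => ?_) _
            have hvne : (c : Eucl n × ℝ) ≠ (c₀ : Eucl n × ℝ) := Subtype.coe_injective.ne hc
            have hdisj := h2 _ c.property _ c₀.property hvne
            exact absurd (Set.mem_inter hxc hc₀) (by rw [hdisj]; exact Set.notMem_empty x)
        rw [heq]
        refine le_trans ?_ (ENNReal.le_tsum c₀)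
        rw [Set.indicator_of_mem hc₀]
      · push_neg at hex
        have heq : (∑' c : ↥𝒬, (cube n (c : Eucl n × ℝ).1 (c : Eucl n × ℝ).2).indicator
            (fun _ => ENNReal.ofReal (aTerm n δ u (c : Eucl n × ℝ).1 (c : Eucl n × ℝ).2)) x)
            = 0 := by
          convert tsum_zero with c
          exact Set.indicator_of_notMem (hex c) _
        rw [heq, ENNReal.zero_rpow_of_pos hp0]
        exact zero_le'
    have hterm : ∀ c : ↥𝒬, (∫⁻ x in G,
          (cube n (c : Eucl n × ℝ).1 (c : Eucl n × ℝ).2).indicator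
            (fun _ => ENNReal.ofReal (aTerm n δ u (c : Eucl n × ℝ).1 (c : Eucl n × ℝ).2) ^ p) x
          ∂volume)
        = ENNReal.ofReal (aTerm n δ u (c : Eucl n × ℝ).1 (c : Eucl n × ℝ).2) ^ p *
            volume (cube n (c : Eucl n × ℝ).1 (c : Eucl n × ℝ).2) := by
      intro c
      rw [lintegral_indicator (S7.measurableSet_cube _ _),
        Measure.restrict_restrict (S7.measurableSet_cube _ _),
        Set.inter_eq_self_of_subset_left (hQsubG c), setLIntegral_const]
    have hext : ∀ c : ↥𝒬,
        (∫⁻ x in cube n (c : Eucl n × ℝ).1 (c : Eucl n × ℝ).2,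
          ∫⁻ y in cube n (c : Eucl n × ℝ).1 (c : Eucl n × ℝ).2,
            fracKernel n δ p u x y ∂volume ∂volume)
        ≤ ∫⁻ x in cube n (c : Eucl n × ℝ).1 (c : Eucl n × ℝ).2,
            ∫⁻ y in tauBall n τ G x, fracKernel n δ p u x y ∂volume ∂volume := by
      intro c
      refine lintegral_mono_ae ?_
      filter_upwards [ae_restrict_mem (S7.measurableSet_cube _ _)] with x hx
      refine lintegral_mono' (Measure.restrict_mono (fun y hy => ?_) le_rfl) le_rfl
      exact S7.mem_tauBall_of_cube hτ (h1 _ c.property).1 hG (h1 _ c.property).2 hx hy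
    calc (∫⁻ x in G,
          (∑' c : ↥𝒬, (cube n (c : Eucl n × ℝ).1 (c : Eucl n × ℝ).2).indicator
            (fun _ => ENNReal.ofReal (aTerm n δ u (c : Eucl n × ℝ).1 (c : Eucl n × ℝ).2)) x) ^ p
          ∂volume)
        ≤ ∫⁻ x in G, ∑' c : ↥𝒬, (cube n (c : Eucl n × ℝ).1 (c : Eucl n × ℝ).2).indicator
            (fun _ => ENNReal.ofReal (aTerm n δ u (c : Eucl n × ℝ).1 (c : Eucl n × ℝ).2) ^ p) x
          ∂volume := lintegral_mono hpt
      _ = ∑' c : ↥𝒬, ∫⁻ x in G,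
            (cube n (c : Eucl n × ℝ).1 (c : Eucl n × ℝ).2).indicator
              (fun _ => ENNReal.ofReal (aTerm n δ u (c : Eucl n × ℝ).1 (c : Eucl n × ℝ).2) ^ p) x
            ∂volume :=
          lintegral_tsum fun c =>
            (measurable_const.indicator (S7.measurableSet_cube _ _)).aemeasurable
      _ = ∑' c : ↥𝒬, ENNReal.ofReal (aTerm n δ u (c : Eucl n × ℝ).1 (c : Eucl n × ℝ).2) ^ p *
            volume (cube n (c : Eucl n × ℝ).1 (c : Eucl n × ℝ).2) := tsum_congr hterm
      _ ≤ ∑' c : ↥𝒬, ENNReal.ofReal (Real.sqrt n ^ ((n:ℝ) + δ * p)) *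
            ∫⁻ x in cube n (c : Eucl n × ℝ).1 (c : Eucl n × ℝ).2,
              ∫⁻ y in tauBall n τ G x, fracKernel n δ p u x y ∂volume ∂volume :=
          ENNReal.tsum_le_tsum fun c =>
            le_trans (S7.cube_estimate hδ.1 hp (h1 _ c.property).1
              (hu.mono_set (hQsubG c)))
              (mul_le_mul_right (hext c) _)
      _ = ENNReal.ofReal (Real.sqrt n ^ ((n:ℝ) + δ * p)) *
            ∑' c : ↥𝒬, ∫⁻ x in cube n (c : Eucl n × ℝ).1 (c : Eucl n × ℝ).2,
              ∫⁻ y in tauBall n τ G x, fracKernel n δ p u x y ∂volume ∂volume :=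
          ENNReal.tsum_mul_left
      _ ≤ ENNReal.ofReal (Real.sqrt n ^ ((n:ℝ) + δ * p)) * fracEnergyTau n δ τ p G u := by
          refine mul_le_mul_right ?_ _
          rw [← lintegral_iUnion (fun c => S7.measurableSet_cube _ _) hcube_disj]
          simp only [fracEnergyTau]
          exact lintegral_mono' (Measure.restrict_mono
            (Set.iUnion_subset fun c => hQsubG c) le_rfl) le_rfl
  calc (∫⁻ x in G,
        (∑' c : ↥𝒬, (cube n (c : Eucl n × ℝ).1 (c : Eucl n × ℝ).2).indicator
          (fun _ => ENNReal.ofReal (aTerm n δ u (c : Eucl n × ℝ).1 (c : Eucl n × ℝ).2)) x) ^ p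
        ∂volume) ^ (1/p)
      ≤ (ENNReal.ofReal (Real.sqrt n ^ ((n:ℝ) + δ * p)) *
          fracEnergyTau n δ τ p G u) ^ (1/p) :=
        ENNReal.rpow_le_rpow hmain (by positivity)
    _ = ENNReal.ofReal (Real.sqrt n ^ ((n:ℝ) / p + δ)) * fracEnergyTau n δ τ p G u ^ (1/p) := by
        rw [ENNReal.mul_rpow_of_nonneg _ _ (by positivity : (0:ℝ) ≤ 1/p),
          ENNReal.ofReal_rpow_of_nonneg (by positivity) (by positivity : (0:ℝ) ≤ 1/p)]
        congr 2
        rw [← Real.rpow_mul (Real.sqrt_nonneg _)]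
        congr 1
        field_simp
end

section
/- Fix 1 ≤ p, q < ∞ with 1/p − 1/q = δ/n, δ ∈ [0,1], and u ∈ L¹_loc(ℝⁿ). For a cube Q in ℝⁿ set a(Q) = |u|_{A^{δ,p}_1(Q)} · |Q|^{−1/q}. Then for every cube Q in ℝⁿ and every family 𝒬 of pairwise disjoint cubes contained in Q, the inequality ∑_{P∈𝒬} a(P)^q |P| ≤ 2^{q/p} a(Q)^q |Q| holds. -/
open MeasureTheory Metric Set
open scoped ENNReal NNReal BigOperators

/-! ### Auxiliary lemmas -/

lemma isClosed_cube (n : ℕ) (z : Eucl n) (r : ℝ) : IsClosed (cube n z r) := by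
  have h : cube n z r = ⋂ i, {x : Eucl n | |x i - z i| ≤ r} := by
    ext x; simp [cube, Set.mem_iInter]
  rw [h]
  refine isClosed_iInter fun i => isClosed_le ?_ continuous_const
  exact (((EuclideanSpace.proj i : EuclideanSpace ℝ (Fin n) →L[ℝ] ℝ).continuous).sub
    continuous_const).abs

lemma ball_subset_cube (n : ℕ) (z : Eucl n) (r : ℝ) : ball z r ⊆ cube n z r := by
  intro x hx i
  have h1 : dist (x i) (z i) ≤ dist x z := by
    rw [EuclideanSpace.dist_eq]
    have h2 : dist (x i) (z i) = Real.sqrt (dist (x i) (z i) ^ 2) :=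
      (Real.sqrt_sq dist_nonneg).symm
    rw [h2]
    refine Real.sqrt_le_sqrt ?_
    exact Finset.single_le_sum (f := fun j => dist (x j) (z j) ^ 2)
      (fun j _ => sq_nonneg _) (Finset.mem_univ i)
  calc |x i - z i| = dist (x i) (z i) := (Real.dist_eq _ _).symm
    _ ≤ dist x z := h1
    _ ≤ r := (mem_ball.mp hx).le

lemma cube_subset_closedBall (n : ℕ) (z : Eucl n) (r : ℝ) :
    cube n z r ⊆ closedBall z (Real.sqrt (n * r ^ 2)) := by
  intro x hx
  rw [mem_closedBall, EuclideanSpace.dist_eq]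
  refine Real.sqrt_le_sqrt ?_
  have h : ∀ i, dist (x i) (z i) ^ 2 ≤ r ^ 2 := by
    intro i
    rw [Real.dist_eq]
    exact pow_le_pow_left₀ (abs_nonneg _) (hx i) 2
  calc ∑ i, dist (x i) (z i) ^ 2 ≤ ∑ _i : Fin n, r ^ 2 :=
        Finset.sum_le_sum fun i _ => h i
    _ = n * r ^ 2 := by simp [Finset.sum_const, nsmul_eq_mul]

lemma cube_vol_pos (n : ℕ) (z : Eucl n) {r : ℝ} (hr : 0 < r) : 0 < volume (cube n z r) :=
  lt_of_lt_of_le (measure_ball_pos volume z hr) (measure_mono (ball_subset_cube n z r))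

lemma cube_vol_lt_top (n : ℕ) (z : Eucl n) (r : ℝ) : volume (cube n z r) < ⊤ :=
  lt_of_le_of_lt (measure_mono (cube_subset_closedBall n z r)) measure_closedBall_lt_top

lemma sum_rpow_le_rpow_sum {ι : Type*} (s : Finset ι) (a : ι → ℝ≥0∞) {r : ℝ} (hr : 1 ≤ r) :
    ∑ i ∈ s, a i ^ r ≤ (∑ i ∈ s, a i) ^ r := by
  classical
  induction s using Finset.induction_on with
  | empty => simpa using zero_le _
  | insert _ _ hx ih =>
    rw [Finset.sum_insert hx, Finset.sum_insert hx]
    exact le_trans (add_le_add_right ih _) (ENNReal.add_rpow_le_rpow_add _ _ hr)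

/-- The function `∑_{Q ∈ F} (|Q|^{-1-δ/n} ∫_Q |u - u_Q|) χ_Q`. -/
noncomputable def cubeInd (n : ℕ) (δ : ℝ) (u : Eucl n → ℝ) (F : Set (Eucl n × ℝ))
    (x : Eucl n) : ℝ≥0∞ :=
  ∑' c : F, (cube n (c : Eucl n × ℝ).1 (c : Eucl n × ℝ).2).indicator
    (fun _ => ENNReal.ofReal (aTerm n δ u (c : Eucl n × ℝ).1 (c : Eucl n × ℝ).2)) x

/-- The value of a single family in the `A`-seminorm. -/
noncomputable def famVal (n : ℕ) (δ p : ℝ) (G : Set (Eucl n)) (u : Eucl n → ℝ)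
    (F : Set (Eucl n × ℝ)) : ℝ≥0∞ :=
  (∫⁻ x in G, cubeInd n δ u F x ^ p ∂volume) ^ (1 / p)

lemma ASeminorm_eq (n : ℕ) (κ δ p : ℝ) (G : Set (Eucl n)) (u : Eucl n → ℝ) :
    ASeminorm n κ δ p G u =
      ⨆ (𝒬 : Set (Eucl n × ℝ)) (_ : ∀ c ∈ 𝒬, 0 < c.2 ∧ cube n c.1 (κ * c.2) ⊆ G)
        (_ : ∀ c ∈ 𝒬, ∀ c' ∈ 𝒬, c ≠ c' → cube n c.1 c.2 ∩ cube n c'.1 c'.2 = ∅),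
        famVal n δ p G u 𝒬 := rfl

lemma cubeInd_mono (n : ℕ) (δ : ℝ) (u : Eucl n → ℝ) {F G : Set (Eucl n × ℝ)} (h : F ⊆ G)
    (x : Eucl n) : cubeInd n δ u F x ≤ cubeInd n δ u G x :=
  ENNReal.summable.tsum_le_tsum_of_inj (Set.inclusion h) (Set.inclusion_injective h)
    (fun _ _ => zero_le) (fun _ => le_rfl) ENNReal.summable

lemma famVal_le_ASeminorm (n : ℕ) (δ p : ℝ) {G : Set (Eucl n)} (u : Eucl n → ℝ)
    {F : Set (Eucl n × ℝ)} (h1 : ∀ c ∈ F, 0 < c.2 ∧ cube n c.1 (1 * c.2) ⊆ G)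
    (h2 : ∀ c ∈ F, ∀ c' ∈ F, c ≠ c' → cube n c.1 c.2 ∩ cube n c'.1 c'.2 = ∅) :
    famVal n δ p G u F ≤ ASeminorm n 1 δ p G u := by
  rw [ASeminorm_eq]
  exact le_iSup_of_le F (le_iSup_of_le h1 (le_iSup_of_le h2 le_rfl))

lemma ASeminorm_mono (n : ℕ) (δ p : ℝ) (hp : 0 < p) {G G' : Set (Eucl n)} (u : Eucl n → ℝ)
    (h : G ⊆ G') : ASeminorm n 1 δ p G u ≤ ASeminorm n 1 δ p G' u := by
  rw [ASeminorm_eq, ASeminorm_eq]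
  refine iSup_le fun F => iSup_le fun h1 => iSup_le fun h2 => ?_
  refine le_trans (ENNReal.rpow_le_rpow (lintegral_mono_set h) (by positivity)) ?_
  exact le_iSup_of_le F (le_iSup_of_le
    (fun c hc => ⟨(h1 c hc).1, (h1 c hc).2.trans h⟩) (le_iSup_of_le h2 le_rfl))

lemma famVal_rpow (n : ℕ) (δ : ℝ) {p : ℝ} (hp : 0 < p) (G : Set (Eucl n)) (u : Eucl n → ℝ)
    (F : Set (Eucl n × ℝ)) :
    famVal n δ p G u F ^ p = ∫⁻ x in G, cubeInd n δ u F x ^ p ∂volume := by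
  rw [famVal, ← ENNReal.rpow_mul, one_div_mul_cancel hp.ne', ENNReal.rpow_one]
/-- For `1 ≤ p, q < ∞` with `1/p - 1/q = δ/n`, `δ ∈ [0,1]`, and
`u ∈ L¹_loc(ℝⁿ)`, define `a(Q) = |u|_{A^{δ,p}_1(Q)} |Q|^{-1/q}` for cubes `Q`. Then for
every cube `Q` and every family `𝒬` of pairwise disjoint cubes contained in `Q`,
`∑_{P ∈ 𝒬} a(P)^q |P| ≤ 2^{q/p} a(Q)^q |Q|`. -/
theorem statement9 (n : ℕ) (δ p q : ℝ) (hδ : δ ∈ Icc (0:ℝ) 1)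
    (hp : 1 ≤ p) (hq : 1 ≤ q) (hpq : 1 / p - 1 / q = δ / n)
    (u : Eucl n → ℝ) (hu : LocallyIntegrable u volume)
    (z : Eucl n) (r : ℝ) (hr : 0 < r) (𝒬 : Set (Eucl n × ℝ))
    (h𝒬 : ∀ c ∈ 𝒬, 0 < c.2 ∧ cube n c.1 c.2 ⊆ cube n z r)
    (hdisj : ∀ c ∈ 𝒬, ∀ c' ∈ 𝒬, c ≠ c' → cube n c.1 c.2 ∩ cube n c'.1 c'.2 = ∅) :
    (∑' c : 𝒬,
        (ASeminorm n 1 δ p (cube n (c : Eucl n × ℝ).1 (c : Eucl n × ℝ).2) u *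
            volume (cube n (c : Eucl n × ℝ).1 (c : Eucl n × ℝ).2) ^ (-(1 / q))) ^ q *
          volume (cube n (c : Eucl n × ℝ).1 (c : Eucl n × ℝ).2))
      ≤ (2 : ℝ≥0∞) ^ (q / p) *
          (ASeminorm n 1 δ p (cube n z r) u * volume (cube n z r) ^ (-(1 / q))) ^ q *
          volume (cube n z r) := by
  classical
  have hp0 : 0 < p := lt_of_lt_of_le one_pos hp
  have hq0 : 0 < q := lt_of_lt_of_le one_pos hq
  have hpq' : p ≤ q := by
    have hδn : 0 ≤ δ / n := div_nonneg hδ.1 (Nat.cast_nonneg n)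
    have h1 : 1 / q ≤ 1 / p := by linarith
    exact le_of_one_div_le_one_div hq0 h1
  have hqp1 : 1 ≤ q / p := (le_div_iff₀ hp0).mpr (by linarith)
  have hmulpq : p * (q / p) = q := by field_simp
  have hterm : ∀ (z' : Eucl n) (r' : ℝ), 0 < r' →
      (ASeminorm n 1 δ p (cube n z' r') u * volume (cube n z' r') ^ (-(1 / q))) ^ q *
          volume (cube n z' r')
        = ASeminorm n 1 δ p (cube n z' r') u ^ q := by
    intro z' r' hr'
    rw [ENNReal.mul_rpow_of_nonneg _ _ hq0.le, ← ENNReal.rpow_mul]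
    have he : -(1 / q) * q = -1 := by field_simp
    rw [he, ENNReal.rpow_neg_one, mul_assoc,
      ENNReal.inv_mul_cancel (cube_vol_pos n z' hr').ne' (cube_vol_lt_top n z' r').ne, mul_one]
  rw [mul_assoc, hterm z r hr]
  have hL : ∀ c : 𝒬,
      ((ASeminorm n 1 δ p (cube n (c : Eucl n × ℝ).1 (c : Eucl n × ℝ).2) u *
          volume (cube n (c : Eucl n × ℝ).1 (c : Eucl n × ℝ).2) ^ (-(1 / q))) ^ q *
        volume (cube n (c : Eucl n × ℝ).1 (c : Eucl n × ℝ).2))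
      = ASeminorm n 1 δ p (cube n (c : Eucl n × ℝ).1 (c : Eucl n × ℝ).2) u ^ q :=
    fun c => hterm _ _ (h𝒬 (↑c) c.prop).1
  rw [tsum_congr hL]
  by_cases hfin : ∀ c ∈ 𝒬, ASeminorm n 1 δ p (cube n c.1 c.2) u ≠ ⊤
  · -- main case: all local seminorms finite
    rw [ENNReal.tsum_eq_iSup_sum]
    refine iSup_le fun s => ?_
    have hex : ∀ c : 𝒬, ∃ F : Set (Eucl n × ℝ),
        (∀ d ∈ F, 0 < d.2 ∧
          cube n d.1 (1 * d.2) ⊆ cube n (c : Eucl n × ℝ).1 (c : Eucl n × ℝ).2) ∧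
        (∀ d ∈ F, ∀ d' ∈ F, d ≠ d' → cube n d.1 d.2 ∩ cube n d'.1 d'.2 = ∅) ∧
        (2 : ℝ≥0∞) ^ (-(1 / p)) *
            ASeminorm n 1 δ p (cube n (c : Eucl n × ℝ).1 (c : Eucl n × ℝ).2) u ≤
          famVal n δ p (cube n (c : Eucl n × ℝ).1 (c : Eucl n × ℝ).2) u F := by
      intro c
      rcases eq_or_ne (ASeminorm n 1 δ p (cube n (c : Eucl n × ℝ).1 (c : Eucl n × ℝ).2) u) 0
        with h0 | h0
      · refine ⟨∅, by simp, by simp, ?_⟩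
        rw [h0, mul_zero]
        exact zero_le
      · have hlt : (2 : ℝ≥0∞) ^ (-(1 / p)) *
            ASeminorm n 1 δ p (cube n (c : Eucl n × ℝ).1 (c : Eucl n × ℝ).2) u <
            ASeminorm n 1 δ p (cube n (c : Eucl n × ℝ).1 (c : Eucl n × ℝ).2) u := by
          have h1 : (2 : ℝ≥0∞) ^ (-(1 / p)) < 1 :=
            ENNReal.rpow_lt_one_of_one_lt_of_neg ENNReal.one_lt_two (neg_lt_zero.mpr (by positivity))
          calc (2 : ℝ≥0∞) ^ (-(1 / p)) *
              ASeminorm n 1 δ p (cube n (c : Eucl n × ℝ).1 (c : Eucl n × ℝ).2) u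
              < 1 * ASeminorm n 1 δ p (cube n (c : Eucl n × ℝ).1 (c : Eucl n × ℝ).2) u :=
                ENNReal.mul_lt_mul_left h0 (hfin (↑c) c.prop) h1
            _ = _ := one_mul _
        conv at hlt => rw [ASeminorm_eq n 1 δ p]
        obtain ⟨F, hlt⟩ := lt_iSup_iff.mp hlt
        obtain ⟨hF1, hlt⟩ := lt_iSup_iff.mp hlt
        obtain ⟨hF2, hlt⟩ := lt_iSup_iff.mp hlt
        exact ⟨F, hF1, hF2, hlt.le⟩
    choose F hF1 hF2 hF3 using hex
    have hGsub : ∀ c ∈ s, F c ⊆ ⋃ c' ∈ s, F c' :=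
      fun c hc d hd => Set.mem_iUnion₂.mpr ⟨c, hc, hd⟩
    have hG1 : ∀ d ∈ ⋃ c ∈ s, F c, 0 < d.2 ∧ cube n d.1 (1 * d.2) ⊆ cube n z r := by
      intro d hd
      obtain ⟨c, _, hdc⟩ := Set.mem_iUnion₂.mp hd
      exact ⟨(hF1 c d hdc).1, (hF1 c d hdc).2.trans (h𝒬 (↑c) c.prop).2⟩
    have hG2 : ∀ d ∈ ⋃ c ∈ s, F c, ∀ d' ∈ ⋃ c ∈ s, F c, d ≠ d' →
        cube n d.1 d.2 ∩ cube n d'.1 d'.2 = ∅ := by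
      intro d hd d' hd' hne
      obtain ⟨c, _, hdc⟩ := Set.mem_iUnion₂.mp hd
      obtain ⟨c', _, hd'c'⟩ := Set.mem_iUnion₂.mp hd'
      by_cases hcc : c = c'
      · subst hcc
        exact hF2 c d hdc d' hd'c' hne
      · have hsub : cube n d.1 d.2 ∩ cube n d'.1 d'.2 ⊆
            cube n (c : Eucl n × ℝ).1 (c : Eucl n × ℝ).2 ∩
              cube n (c' : Eucl n × ℝ).1 (c' : Eucl n × ℝ).2 := by
          refine Set.inter_subset_inter ?_ ?_
          · have h1 := (hF1 c d hdc).2; rwa [one_mul] at h1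
          · have h1 := (hF1 c' d' hd'c').2; rwa [one_mul] at h1
        have hPP := hdisj (↑c) c.prop (↑c') c'.prop (fun h => hcc (Subtype.ext h))
        rw [hPP] at hsub
        exact Set.subset_empty_iff.mp hsub
    have hkey : ∑ c ∈ s,
        famVal n δ p (cube n (c : Eucl n × ℝ).1 (c : Eucl n × ℝ).2) u (F c) ^ p
        ≤ ASeminorm n 1 δ p (cube n z r) u ^ p := by
      have hle : famVal n δ p (cube n z r) u (⋃ c ∈ s, F c) ≤
          ASeminorm n 1 δ p (cube n z r) u := famVal_le_ASeminorm n δ p u hG1 hG2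
      have hle' : famVal n δ p (cube n z r) u (⋃ c ∈ s, F c) ^ p ≤
          ASeminorm n 1 δ p (cube n z r) u ^ p := ENNReal.rpow_le_rpow hle hp0.le
      rw [famVal_rpow n δ hp0] at hle'
      refine le_trans ?_ hle'
      calc ∑ c ∈ s,
          famVal n δ p (cube n (c : Eucl n × ℝ).1 (c : Eucl n × ℝ).2) u (F c) ^ p
          = ∑ c ∈ s, ∫⁻ x in cube n (c : Eucl n × ℝ).1 (c : Eucl n × ℝ).2,
              cubeInd n δ u (F c) x ^ p ∂volume :=
            Finset.sum_congr rfl fun c _ => famVal_rpow n δ hp0 _ u _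
        _ ≤ ∑ c ∈ s, ∫⁻ x in cube n (c : Eucl n × ℝ).1 (c : Eucl n × ℝ).2,
              cubeInd n δ u (⋃ c' ∈ s, F c') x ^ p ∂volume :=
            Finset.sum_le_sum fun c hc => lintegral_mono fun x =>
              ENNReal.rpow_le_rpow (cubeInd_mono n δ u (hGsub c hc) x) hp0.le
        _ = ∫⁻ x in ⋃ c ∈ s, cube n (c : Eucl n × ℝ).1 (c : Eucl n × ℝ).2,
              cubeInd n δ u (⋃ c' ∈ s, F c') x ^ p ∂volume := by
            refine (lintegral_biUnion_finset ?_ ?_ _).symm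
            · intro c _ c' _ hne
              exact Set.disjoint_iff_inter_eq_empty.mpr
                (hdisj (↑c) c.prop (↑c') c'.prop (fun h => hne (Subtype.ext h)))
            · exact fun c _ => (isClosed_cube n _ _).measurableSet
        _ ≤ ∫⁻ x in cube n z r, cubeInd n δ u (⋃ c' ∈ s, F c') x ^ p ∂volume :=
            lintegral_mono_set (Set.iUnion₂_subset fun c _ => (h𝒬 (↑c) c.prop).2)
    have hAle : ∀ c : 𝒬,
        ASeminorm n 1 δ p (cube n (c : Eucl n × ℝ).1 (c : Eucl n × ℝ).2) u ≤
          (2 : ℝ≥0∞) ^ (1 / p) *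
            famVal n δ p (cube n (c : Eucl n × ℝ).1 (c : Eucl n × ℝ).2) u (F c) := by
      intro c
      have h2 : (2 : ℝ≥0∞) ^ (1 / p) * ((2 : ℝ≥0∞) ^ (-(1 / p)) *
          ASeminorm n 1 δ p (cube n (c : Eucl n × ℝ).1 (c : Eucl n × ℝ).2) u)
          = ASeminorm n 1 δ p (cube n (c : Eucl n × ℝ).1 (c : Eucl n × ℝ).2) u := by
        rw [← mul_assoc, ← ENNReal.rpow_add _ _ two_ne_zero ENNReal.ofNat_ne_top,
          add_neg_cancel, ENNReal.rpow_zero, one_mul]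
      calc ASeminorm n 1 δ p (cube n (c : Eucl n × ℝ).1 (c : Eucl n × ℝ).2) u
          = (2 : ℝ≥0∞) ^ (1 / p) * ((2 : ℝ≥0∞) ^ (-(1 / p)) *
              ASeminorm n 1 δ p (cube n (c : Eucl n × ℝ).1 (c : Eucl n × ℝ).2) u) := h2.symm
        _ ≤ (2 : ℝ≥0∞) ^ (1 / p) *
              famVal n δ p (cube n (c : Eucl n × ℝ).1 (c : Eucl n × ℝ).2) u (F c) :=
            mul_le_mul_right (hF3 c) _
    calc ∑ c ∈ s, ASeminorm n 1 δ p (cube n (c : Eucl n × ℝ).1 (c : Eucl n × ℝ).2) u ^ q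
        ≤ ∑ c ∈ s, ((2 : ℝ≥0∞) ^ (1 / p) *
            famVal n δ p (cube n (c : Eucl n × ℝ).1 (c : Eucl n × ℝ).2) u (F c)) ^ q :=
          Finset.sum_le_sum fun c _ => ENNReal.rpow_le_rpow (hAle c) hq0.le
      _ = ∑ c ∈ s, (2 : ℝ≥0∞) ^ (q / p) *
            (famVal n δ p (cube n (c : Eucl n × ℝ).1 (c : Eucl n × ℝ).2) u (F c) ^ p)
              ^ (q / p) :=
          Finset.sum_congr rfl fun c _ => by
            rw [ENNReal.mul_rpow_of_nonneg _ _ hq0.le, ← ENNReal.rpow_mul,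
              ← ENNReal.rpow_mul, one_div_mul_eq_div, hmulpq]
      _ = (2 : ℝ≥0∞) ^ (q / p) * ∑ c ∈ s,
            (famVal n δ p (cube n (c : Eucl n × ℝ).1 (c : Eucl n × ℝ).2) u (F c) ^ p)
              ^ (q / p) := by
          rw [Finset.mul_sum]
      _ ≤ (2 : ℝ≥0∞) ^ (q / p) * (∑ c ∈ s,
            famVal n δ p (cube n (c : Eucl n × ℝ).1 (c : Eucl n × ℝ).2) u (F c) ^ p)
              ^ (q / p) :=
          mul_le_mul_right (sum_rpow_le_rpow_sum s _ hqp1) _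
      _ ≤ (2 : ℝ≥0∞) ^ (q / p) * (ASeminorm n 1 δ p (cube n z r) u ^ p) ^ (q / p) :=
          mul_le_mul_right (ENNReal.rpow_le_rpow hkey (by positivity)) _
      _ = (2 : ℝ≥0∞) ^ (q / p) * ASeminorm n 1 δ p (cube n z r) u ^ q := by
          rw [← ENNReal.rpow_mul, hmulpq]
  · -- degenerate case: some local seminorm is infinite
    push_neg at hfin
    obtain ⟨c, hc, hctop⟩ := hfin
    have hQtop : ASeminorm n 1 δ p (cube n z r) u = ⊤ :=
      top_le_iff.mp (hctop ▸ ASeminorm_mono n δ p hp0 u (h𝒬 c hc).2)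
    rw [hQtop, ENNReal.top_rpow_of_pos hq0, ENNReal.mul_top
      (ENNReal.rpow_pos (by norm_num) (by norm_num)).ne']
    exact le_top
end
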